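/- arXiv:2506.03603 — 5 statements merged into one kernel-verified Lean document; each statement's English description precedes it below -/
import Mathlib

section
/- Let W be the set of non-negative integers, and let F = {{i, i+1} : i ≥ 1} ∪ {{0} ∪ {i, i+1, i+2, ...} : i ≥ 1}. Then there is no tree T with vertex set W such that every member of F is the vertex set of a subtree (connected subgraph) of T. -/
open Set

universe u

/-- The intersection graph of a family `F` of sets: vertices are the members of `F`,
two distinct members adjacent iff they intersect. -/
def IntGraph {W : Type u} (F : Set (Set W)) : SimpleGraph F where
  Adj S T := S ≠ T ∧ ((S : Set W) ∩ (T : Set W)).Nonempty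
  symm := by
    constructor
    rintro S T ⟨h1, x, hx1, hx2⟩
    exact ⟨h1.symm, x, hx2, hx1⟩
  loopless := by constructor; rintro S ⟨h, _⟩; exact h rfl

/-- `G` has an induced cycle of length at least 4. -/
def HasLongInducedCycle {V : Type u} (G : SimpleGraph V) : Prop :=
  ∃ n : ℕ, 4 ≤ n ∧ ∃ f : ZMod n → V, Function.Injective f ∧
    ∀ i j : ZMod n, G.Adj (f i) (f j) ↔ (j = i + 1 ∨ i = j + 1)

/-- A graph is chordal iff it has no induced cycle of length at least 4. -/
def Chordal {V : Type u} (G : SimpleGraph V) : Prop := ¬ HasLongInducedCycle G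

/-- The chordal property for a family of sets: its intersection graph is chordal. -/
def ChordalProp {W : Type u} (F : Set (Set W)) : Prop := Chordal (IntGraph F)

/-- The finite Helly property: every nonempty finite subfamily whose members pairwise
intersect has a common element. -/
def FiniteHelly {W : Type u} (F : Set (Set W)) : Prop :=
  ∀ R : Finset (Set W), R.Nonempty → ↑R ⊆ F →
    (∀ S ∈ R, ∀ T ∈ R, S ≠ T → (S ∩ T).Nonempty) →
    (⋂ S ∈ R, S).Nonempty

/-- A family `F` is well-founded if there is no sequence `(Sᵢ)` of members of `F` with
nonempty total intersection such that no partial intersection `S₀ ∩ ⋯ ∩ Sᵢ` is contained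
in `S_{i+1}`. -/
def WellFoundedFamily {W : Type u} (F : Set (Set W)) : Prop :=
  ¬ ∃ S : ℕ → Set W, (∀ i, S i ∈ F) ∧ (⋂ i, S i).Nonempty ∧
      ∀ i, ¬ (⋂ j ≤ i, S j) ⊆ S (i + 1)

/-- `X` is `F`-connected: for every partition of `X` into two nonempty parts, some
member of `F` included in `X` meets both parts. -/
def FConnected {W : Type u} (F : Set (Set W)) (X : Set W) : Prop :=
  ∀ A B : Set W, A ∪ B = X → A ∩ B = ∅ → A.Nonempty → B.Nonempty →
    ∃ S ∈ F, S ⊆ X ∧ (S ∩ A).Nonempty ∧ (S ∩ B).Nonempty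

/-- A path-decomposition of `G` indexed by `Fin n`: bags cover all vertices and edges,
and for each vertex the set of indices of bags containing it is an interval. -/
def IsPathDecomp {V : Type u} (G : SimpleGraph V) {n : ℕ} (B : Fin n → Finset V) : Prop :=
  (∀ v, ∃ i, v ∈ B i) ∧
  (∀ u v, G.Adj u v → ∃ i, u ∈ B i ∧ v ∈ B i) ∧
  (∀ v : V, ∀ i i' i'' : Fin n, i ≤ i' → i' ≤ i'' → v ∈ B i → v ∈ B i'' → v ∈ B i')

/-- `G` has path-width at most `k`: some path-decomposition has all bags of size ≤ k+1. -/
def PathWidthLE {V : Type u} (G : SimpleGraph V) (k : ℕ) : Prop :=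
  ∃ (n : ℕ) (B : Fin n → Finset V), IsPathDecomp G B ∧ ∀ i, (B i).card ≤ k + 1

/-- `G` has line-width at most `k`: there is a decomposition indexed by a linearly ordered
set, satisfying the path-decomposition axioms, with all bags of size ≤ k+1. -/
def LineWidthLE {V : Type u} (G : SimpleGraph V) (k : ℕ) : Prop :=
  ∃ (L : Type u) (r : L → L → Prop), IsLinearOrder L r ∧
    ∃ B : L → Finset V,
      (∀ v, ∃ i, v ∈ B i) ∧
      (∀ u v, G.Adj u v → ∃ i, u ∈ B i ∧ v ∈ B i) ∧
      (∀ v i i' i'', r i i' → r i' i'' → v ∈ B i → v ∈ B i'' → v ∈ B i') ∧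
      ∀ i, (B i).card ≤ k + 1

/-- The family of the counterexample: pairs `{i, i+1}` for `i ≥ 1`, together with the
sets `{0} ∪ {i, i+1, i+2, ...}` for `i ≥ 1`. -/
def F0 : Set (Set ℕ) :=
  {A | ∃ i : ℕ, 1 ≤ i ∧ A = {i, i + 1}} ∪
  {A | ∃ i : ℕ, 1 ≤ i ∧ A = insert 0 {n : ℕ | i ≤ n}}

open SimpleGraph

lemma chainWalk (T : SimpleGraph ℕ) (hadj : ∀ i : ℕ, 1 ≤ i → T.Adj i (i+1))
    (a b : ℕ) (ha : 1 ≤ a) (hab : a ≤ b) :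
    ∃ w : T.Walk a b, ∀ x ∈ w.support, a ≤ x := by
  induction b, hab using Nat.le_induction with
  | base => exact ⟨Walk.nil, by simp⟩
  | succ b hb ih =>
    obtain ⟨w, hw⟩ := ih
    refine ⟨w.concat (hadj b (le_trans ha hb)), ?_⟩
    intro x hx
    rw [SimpleGraph.Walk.support_concat, List.mem_append] at hx
    rcases hx with hx | hx
    · exact hw x hx
    · simp only [List.mem_singleton] at hx; omega

/-- There is no tree with vertex set ℕ in which every member of `F0` induces a
connected subgraph. -/
theorem stmt0 :
    ¬ ∃ T : SimpleGraph ℕ, T.IsTree ∧ ∀ S ∈ F0, (T.induce S).Connected := by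
  rintro ⟨T, hT, hconn⟩
  -- consecutive integers (≥ 1) are adjacent in T
  have hadj : ∀ i : ℕ, 1 ≤ i → T.Adj i (i+1) := by
    intro i hi
    have hmem : ({i, i+1} : Set ℕ) ∈ F0 := Or.inl ⟨i, hi, rfl⟩
    have hc := hconn _ hmem
    have hi1 : (i : ℕ) ∈ ({i, i+1} : Set ℕ) := by simp
    have hi2 : (i+1 : ℕ) ∈ ({i, i+1} : Set ℕ) := by simp
    obtain ⟨w⟩ := hc.preconnected ⟨i, hi1⟩ ⟨i+1, hi2⟩
    cases w with
    | @cons _ v _ h p =>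
      have hv : (v : ℕ) = i ∨ (v : ℕ) = i + 1 := v.2
      have hTa : T.Adj i (v : ℕ) := h
      rcases hv with hv | hv
      · rw [hv] at hTa; exact absurd hTa (T.loopless.irrefl i)
      · rwa [hv] at hTa
  -- for every i ≥ 1, vertex 0 has a neighbor ≥ i
  have hnb : ∀ i : ℕ, 1 ≤ i → ∃ m : ℕ, i ≤ m ∧ T.Adj 0 m := by
    intro i hi
    have hmem : (insert 0 {n : ℕ | i ≤ n} : Set ℕ) ∈ F0 := Or.inr ⟨i, hi, rfl⟩
    have hc := hconn _ hmem
    have h0 : (0 : ℕ) ∈ (insert 0 {n : ℕ | i ≤ n} : Set ℕ) := by simp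
    have hii : (i : ℕ) ∈ (insert 0 {n : ℕ | i ≤ n} : Set ℕ) := by
      right; exact le_refl i
    obtain ⟨w⟩ := hc.preconnected ⟨0, h0⟩ ⟨i, hii⟩
    cases w with
    | nil => simp_all
    | @cons _ v _ h p =>
      have hTa : T.Adj 0 (v : ℕ) := h
      have hv : (v : ℕ) = 0 ∨ i ≤ (v : ℕ) := v.2
      rcases hv with hv | hv
      · rw [hv] at hTa; exact absurd hTa (T.loopless.irrefl 0)
      · exact ⟨v, hv, hTa⟩
  obtain ⟨m₁, hm₁, ha₁⟩ := hnb 1 le_rfl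
  obtain ⟨m₂, hm₂, ha₂⟩ := hnb (m₁ + 1) (by omega)
  have hlt : m₁ < m₂ := hm₂
  obtain ⟨w, hw⟩ := chainWalk T hadj m₁ m₂ hm₁ (le_of_lt hlt)
  have h0w : (0 : ℕ) ∉ w.support := fun h => by have := hw 0 h; omega
  set w2 : T.Walk 0 m₂ := Walk.cons ha₁ w with hw2
  set p2 : T.Path 0 m₂ := w2.toPath with hp2
  set p1 : T.Path 0 m₂ := Path.singleton ha₂ with hp1
  have hpe : p1 = p2 := hT.2.path_unique p1 p2
  have he1 : s(0, m₂) ∈ (p1 : T.Walk 0 m₂).edges := by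
    simp [hp1, Path.singleton]
  rw [hpe] at he1
  have hsub : (p2 : T.Walk 0 m₂).edges ⊆ w2.edges := by
    simpa [hp2, Walk.toPath] using w2.edges_bypass_subset
  have he2 : s(0, m₂) ∈ w2.edges := hsub he1
  rw [hw2, Walk.edges_cons, List.mem_cons] at he2
  rcases he2 with he2 | he2
  · have : (0 = 0 ∧ m₂ = m₁) ∨ (0 = m₁ ∧ m₂ = 0) := by
      simpa [Sym2.eq_iff] using he2
    omega
  · have : (0 : ℕ) ∈ w.support := Walk.fst_mem_support_of_mem_edges w he2
    exact h0w this
end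

section
/- Let F be a family of subsets of a finite set W satisfying the chordal property and the finite Helly property. Then there is a tree T with vertex set W such that every member of F is the vertex set of a subtree of T. -/
open Set

universe u

namespace MyCore
variable {V : Type u} {G : SimpleGraph V}

/-- step within X -/
def SStep (G : SimpleGraph V) (X : Set V) (p q : V) : Prop := q ∈ X ∧ G.Adj p q

/-- reachability within X -/
def SReach (G : SimpleGraph V) (X : Set V) (x y : V) : Prop :=
  x ∈ X ∧ Relation.ReflTransGen (SStep G X) x y

lemma SReach.refl {X : Set V} {x : V} (hx : x ∈ X) : SReach G X x x :=
  ⟨hx, Relation.ReflTransGen.refl⟩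

lemma SReach.mem_left {X : Set V} {x y : V} (h : SReach G X x y) : x ∈ X := h.1

lemma SReach.mem_right {X : Set V} {x y : V} (h : SReach G X x y) : y ∈ X := by
  rcases h with ⟨hx, h⟩
  induction h with
  | refl => exact hx
  | tail _ hstep _ => exact hstep.1

lemma SReach.tail {X : Set V} {x y z : V} (h : SReach G X x y) (hz : z ∈ X)
    (ha : G.Adj y z) : SReach G X x z := ⟨h.1, h.2.tail ⟨hz, ha⟩⟩

lemma SReach.trans {X : Set V} {x y z : V} (h : SReach G X x y) (h' : SReach G X y z) :
    SReach G X x z := ⟨h.1, h.2.trans h'.2⟩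

lemma SReach.symm {X : Set V} {x y : V} (h : SReach G X x y) : SReach G X y x := by
  rcases h with ⟨hx, h⟩
  induction h with
  | refl => exact SReach.refl hx
  | tail hxy hstep ih =>
    exact (((SReach.refl hstep.1).tail ih.mem_left hstep.2.symm).trans ih)

lemma SReach.mono {X Y : Set V} (hXY : X ⊆ Y) {x y : V} (h : SReach G X x y) :
    SReach G Y x y := by
  rcases h with ⟨hx, h⟩
  refine ⟨hXY hx, ?_⟩
  induction h with
  | refl => exact Relation.ReflTransGen.refl
  | tail _ hstep ih => exact ih.tail ⟨hXY hstep.1, hstep.2⟩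

/-- strengthening: reachability from a within X happens within the reach-set of a -/
lemma SReach.strengthen {X : Set V} {a y : V} (h : SReach G X a y) :
    SReach G {v | SReach G X a v} a y := by
  rcases h with ⟨hx, h⟩
  induction h with
  | refl => exact SReach.refl (SReach.refl hx)
  | tail hxy hstep ih =>
    refine ih.tail ?_ hstep.2
    exact SReach.tail ih.mem_right hstep.1 hstep.2

/-- a functional walk from x to y with interior in X -/
def FWalk (G : SimpleGraph V) (X : Set V) (x y : V) (k : ℕ) (g : ℕ → V) : Prop :=
  g 0 = x ∧ g k = y ∧ (∀ i, i < k → G.Adj (g i) (g (i + 1))) ∧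
    ∀ i, 0 < i → i < k → g i ∈ X

lemma SReach.exists_fwalk {X : Set V} {x y : V} (h : SReach G X x y) :
    ∃ k g, FWalk G X x y k g ∧ ∀ i, i ≤ k → g i ∈ X := by
  rcases h with ⟨hx, h⟩
  induction h with
  | refl =>
    exact ⟨0, fun _ => x, ⟨rfl, rfl, fun i hi => absurd hi (by omega),
      fun i h1 h2 => absurd h2 (by omega)⟩, fun i hi => by simpa using hx⟩
  | @tail b c hxy hstep ih =>
    obtain ⟨k, g, ⟨hg0, hgk, hadj, hint⟩, hall⟩ := ih
    refine ⟨k + 1, fun i => if i ≤ k then g i else c, ⟨by simpa using hg0, by simp, ?_, ?_⟩, ?_⟩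
    · intro i hi
      by_cases h1 : i + 1 ≤ k
      · simpa [show i ≤ k by omega, h1] using hadj i (by omega)
      · have hik : i = k := by omega
        subst hik
        simpa [h1, hgk] using hstep.2
    · intro i h1 h2
      have hik : i ≤ k := by omega
      simp only [hik, if_pos]
      exact hall i hik
    · intro i hi
      by_cases h1 : i ≤ k
      · simpa [h1] using hall i h1
      · simpa [h1] using hstep.1


/-- minimal walk: no chords, no repeated vertices -/
lemma exists_min_fwalk {X : Set V} {c₁ c₂ : V} (hne : c₁ ≠ c₂) (hna : ¬ G.Adj c₁ c₂)
    (hc₁ : c₁ ∉ X) (hc₂ : c₂ ∉ X) (hex : ∃ k g, FWalk G X c₁ c₂ k g) :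
    ∃ k g, FWalk G X c₁ c₂ k g ∧ 2 ≤ k ∧
      (∀ i j, i < j → j ≤ k → j ≠ i + 1 → ¬ G.Adj (g i) (g j)) ∧
      (∀ i j, i ≤ k → j ≤ k → g i = g j → i = j) := by
  classical
  have hex' : ∃ n : ℕ, ∃ g, FWalk G X c₁ c₂ n g := hex
  obtain ⟨k, ⟨g, hg⟩, hmin⟩ : ∃ k, (∃ g, FWalk G X c₁ c₂ k g) ∧
      ∀ m, m < k → ¬ ∃ g, FWalk G X c₁ c₂ m g :=
    ⟨Nat.find hex', Nat.find_spec hex', fun m hm => Nat.find_min hex' hm⟩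
  have hming : ∀ m, m < k → ∀ g', ¬ FWalk G X c₁ c₂ m g' := by
    intro m hm g' hg'
    exact hmin m hm ⟨g', hg'⟩
  obtain ⟨hg0, hgk, hadj, hint⟩ := hg
  have hk2 : 2 ≤ k := by
    rcases Nat.lt_or_ge k 2 with h | h
    · interval_cases k
      · exact absurd (hg0.symm.trans hgk) hne
      · exact absurd (hg0 ▸ hgk ▸ hadj 0 (by omega)) hna
    · exact h
  refine ⟨k, g, ⟨hg0, hgk, hadj, hint⟩, hk2, ?_, ?_⟩
  · -- no chords
    intro i j hij hjk hne1 hadj'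
    by_cases hend : i = 0 ∧ j = k
    · rw [hend.1, hend.2, hg0, hgk] at hadj'; exact hna hadj'
    refine hming (i + 1 + (k - j)) (by omega)
      (fun t => if t ≤ i then g t else g (t + (j - i - 1))) ⟨?_, ?_, ?_, ?_⟩ <;> dsimp only
    · rw [if_pos (by omega)]; exact hg0
    · rw [if_neg (by omega), show i + 1 + (k - j) + (j - i - 1) = k by omega]; exact hgk
    · intro t ht
      by_cases h1 : t + 1 ≤ i
      · rw [if_pos (by omega : t ≤ i), if_pos h1]
        exact hadj t (by omega)
      · by_cases h2 : t ≤ i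
        · rw [if_pos h2, if_neg h1, show t = i by omega,
            show i + 1 + (j - i - 1) = j by omega]
          exact hadj'
        · rw [if_neg h2, if_neg h1, show t + 1 + (j - i - 1) = (t + (j - i - 1)) + 1 by omega]
          exact hadj _ (by omega)
    · intro t h0 htk
      by_cases h1 : t ≤ i
      · rw [if_pos h1]
        exact hint t h0 (by omega)
      · rw [if_neg h1]
        exact hint _ (by omega) (by omega)
  · -- injectivity
    have key : ∀ i j, i < j → j ≤ k → g i ≠ g j := by
      intro i j hij hjk heq
      by_cases hi0 : i = 0
      · subst hi0
        rcases Nat.lt_or_ge j k with hjk' | hjk'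
        · exact hc₁ (hg0 ▸ heq ▸ hint j (by omega) hjk')
        · have hj : j = k := by omega
          rw [hj, hgk] at heq
          exact hne (hg0 ▸ heq)
      · rcases Nat.lt_or_ge j k with hjk' | hjk'
        · -- splice out the loop
          refine hming (k - (j - i)) (by omega)
            (fun t => if t < i then g t else g (t + (j - i))) ⟨?_, ?_, ?_, ?_⟩ <;> dsimp only
          · rw [if_pos (by omega)]; exact hg0
          · rw [if_neg (by omega), show k - (j - i) + (j - i) = k by omega]; exact hgk
          · intro t ht
            by_cases h1 : t + 1 < i
            · rw [if_pos (by omega : t < i), if_pos h1]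
              exact hadj t (by omega)
            · by_cases h2 : t < i
              · have hadj2 := hadj t (by omega)
                rw [if_pos h2, if_neg h1, show t + 1 + (j - i) = j by omega, ← heq,
                  show i = t + 1 by omega]
                exact hadj2
              · rw [if_neg h2, if_neg h1, show t + 1 + (j - i) = (t + (j - i)) + 1 by omega]
                exact hadj _ (by omega)
          · intro t h0 htk
            by_cases h1 : t < i
            · rw [if_pos h1]
              exact hint t h0 (by omega)
            · rw [if_neg h1]
              exact hint _ (by omega) (by omega)
        · -- j = k : g i = c₂ ∈ X, contradiction
          have hj : j = k := by omega
          rw [hj, hgk] at heq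
          exact hc₂ (heq ▸ hint i (by omega) (by omega))
    intro i j hik hjk heq
    rcases Nat.lt_trichotomy i j with h | h | h
    · exact absurd heq (key i j h hjk)
    · exact h
    · exact absurd heq.symm (key j i h hik)

lemma cycle_of_two_fwalks {A B : Set V} {c₁ c₂ : V}
    (hAB : ∀ a ∈ A, ∀ b ∈ B, ¬ G.Adj a b ∧ a ≠ b)
    (hc2A : c₂ ∉ A) (hc1B : c₁ ∉ B)
    (hne : c₁ ≠ c₂) (hna : ¬ G.Adj c₁ c₂)
    {k₁ g₁} (hw1 : FWalk G A c₁ c₂ k₁ g₁) (hk1 : 2 ≤ k₁)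
    (hch1 : ∀ i j, i < j → j ≤ k₁ → j ≠ i + 1 → ¬ G.Adj (g₁ i) (g₁ j))
    (hinj1 : ∀ i j, i ≤ k₁ → j ≤ k₁ → g₁ i = g₁ j → i = j)
    {k₂ g₂} (hw2 : FWalk G B c₂ c₁ k₂ g₂) (hk2 : 2 ≤ k₂)
    (hch2 : ∀ i j, i < j → j ≤ k₂ → j ≠ i + 1 → ¬ G.Adj (g₂ i) (g₂ j))
    (hinj2 : ∀ i j, i ≤ k₂ → j ≤ k₂ → g₂ i = g₂ j → i = j) :
    HasLongInducedCycle G := by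
  obtain ⟨h10, h1k, hadj1, hint1⟩ := hw1
  obtain ⟨h20, h2k, hadj2, hint2⟩ := hw2
  set n := k₁ + k₂ with hn
  set h : ℕ → V := fun t => if t < k₁ then g₁ t else g₂ (t - k₁) with hh
  have hval1 : ∀ t, t < k₁ → h t = g₁ t := fun t ht => by simp only [hh, ht, if_pos]
  have hval2 : ∀ t, k₁ ≤ t → h t = g₂ (t - k₁) := fun t ht => by
    simp only [hh, if_neg (by omega : ¬ t < k₁)]
  -- injectivity on [0, n)
  have hInj : ∀ s t, s < n → t < n → s < t → h s ≠ h t := by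
    intro s t hs ht hst heq
    by_cases h1 : t < k₁
    · rw [hval1 s (by omega), hval1 t h1] at heq
      exact absurd (hinj1 s t (by omega) (by omega) heq) (by omega)
    · by_cases h2 : s < k₁
      · rw [hval1 s h2, hval2 t (by omega)] at heq
        by_cases hs0 : s = 0
        · rw [hs0, h10, ← h2k] at heq
          have := hinj2 k₂ (t - k₁) (le_refl _) (by omega) heq
          omega
        · by_cases hd0 : t - k₁ = 0
          · rw [hd0, h20] at heq
            exact hc2A (heq ▸ hint1 s (by omega) h2)
          · exact (hAB _ (hint1 s (by omega) h2) _ (hint2 (t - k₁) (by omega) (by omega))).2 heq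
      · rw [hval2 s (by omega), hval2 t (by omega)] at heq
        exact absurd (hinj2 _ _ (by omega) (by omega) heq) (by omega)
  -- adjacency characterization on [0, n)
  have hAdjlt : ∀ s t, s < n → t < n → s < t →
      (G.Adj (h s) (h t) ↔ (t = s + 1 ∨ s = t + 1 ∨ (s = 0 ∧ t = n - 1) ∨ (t = 0 ∧ s = n - 1))) := by
    intro s t hs ht hst
    by_cases h1 : t < k₁
    · rw [hval1 s (by omega), hval1 t h1]
      by_cases ht1 : t = s + 1
      · exact iff_of_true (ht1 ▸ hadj1 s (by omega)) (Or.inl ht1)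
      · exact iff_of_false (hch1 s t hst (by omega) ht1) (by omega)
    · by_cases h2 : s < k₁
      · rw [hval1 s h2, hval2 t (by omega)]
        by_cases hs0 : s = 0
        · subst hs0
          rw [h10, ← h2k]
          by_cases htn : t = n - 1
          · have e : t - k₁ = k₂ - 1 := by omega
            rw [e]
            have := hadj2 (k₂ - 1) (by omega)
            rw [show k₂ - 1 + 1 = k₂ by omega] at this
            exact iff_of_true this.symm (by omega)
          · refine iff_of_false (fun hadj' => ?_) (by omega)
            exact hch2 (t - k₁) k₂ (by omega) (le_refl _) (by omega) hadj'.symm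
        · by_cases hd0 : t = k₁
          · rw [hd0, Nat.sub_self, h20, ← h1k]
            by_cases hsk : s = k₁ - 1
            · have := hadj1 (k₁ - 1) (by omega)
              rw [show k₁ - 1 + 1 = k₁ by omega] at this
              exact iff_of_true (hsk ▸ this) (by omega)
            · exact iff_of_false (hch1 s k₁ (by omega) (le_refl _) (by omega)) (by omega)
          · refine iff_of_false (hAB _ (hint1 s (by omega) h2) _
              (hint2 (t - k₁) (by omega) (by omega))).1 (by omega)
      · rw [hval2 s (by omega), hval2 t (by omega)]
        by_cases ht1 : t = s + 1
        · have := hadj2 (s - k₁) (by omega)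
          rw [show s - k₁ + 1 = t - k₁ by omega] at this
          exact iff_of_true this (Or.inl ht1)
        · exact iff_of_false (hch2 (s - k₁) (t - k₁) (by omega) (by omega) (by omega)) (by omega)
  have hAdj : ∀ s t, s < n → t < n →
      (G.Adj (h s) (h t) ↔ (t = s + 1 ∨ s = t + 1 ∨ (s = 0 ∧ t = n - 1) ∨ (t = 0 ∧ s = n - 1))) := by
    intro s t hs ht
    rcases Nat.lt_trichotomy s t with hst | hst | hst
    · exact hAdjlt s t hs ht hst
    · subst hst
      exact iff_of_false (G.irrefl) (by omega)
    · rw [G.adj_comm, hAdjlt t s ht hs hst]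
      constructor <;> intro <;> omega
  -- build the ZMod cycle
  haveI : NeZero n := ⟨by omega⟩
  refine ⟨n, by omega, fun z => h z.val, ?_, ?_⟩
  · intro a b hab
    apply ZMod.val_injective n
    rcases Nat.lt_trichotomy a.val b.val with hc | hc | hc
    · exact absurd hab (hInj _ _ (ZMod.val_lt a) (ZMod.val_lt b) hc)
    · exact hc
    · exact absurd hab.symm (hInj _ _ (ZMod.val_lt b) (ZMod.val_lt a) hc)
  · intro i j
    have hv : ∀ z : ZMod n, (z + 1).val = (z.val + 1) % n := by
      intro z
      rw [ZMod.val_add, ZMod.val_one_eq_one_mod, Nat.mod_eq_of_lt (show 1 < n by omega)]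
    have key : ∀ a b : ZMod n, (b = a + 1) ↔ (b.val = (a.val + 1) % n) := by
      intro a b
      constructor
      · intro hb; rw [hb, hv]
      · intro hb; exact ZMod.val_injective n (by rw [hv]; exact hb)
    have em : ∀ a : ZMod n, (a.val + 1) % n = if a.val = n - 1 then 0 else a.val + 1 := by
      intro a
      split_ifs with hs
      · rw [hs, Nat.sub_add_cancel (by omega), Nat.mod_self]
      · exact Nat.mod_eq_of_lt (by have := ZMod.val_lt a; omega)
    rw [hAdj i.val j.val (ZMod.val_lt i) (ZMod.val_lt j), key i j, key j i, em, em]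
    have hi := ZMod.val_lt i
    have hj := ZMod.val_lt j
    split_ifs <;> constructor <;> intro <;> omega

/-- `v` is simplicial within `A` -/
def SimpIn (G : SimpleGraph V) (A : Finset V) (v : V) : Prop :=
  v ∈ A ∧ ∀ x ∈ A, ∀ y ∈ A, G.Adj v x → G.Adj v y → x ≠ y → G.Adj x y

lemma dirac_aux (hG : Chordal G) :
    ∀ m : ℕ, ∀ A : Finset V, A.card ≤ m → ∀ K : Finset V, K ⊆ A →
      (∀ x ∈ K, ∀ y ∈ K, x ≠ y → G.Adj x y) → ∀ v₀ ∈ A, v₀ ∉ K →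
      ∃ v, SimpIn G A v ∧ v ∉ K := by
  intro m
  induction m with
  | zero =>
    intro A hA K _ _ v₀ hv₀ _
    rw [Nat.le_zero, Finset.card_eq_zero] at hA
    exact absurd (hA ▸ hv₀) (Finset.notMem_empty v₀)
  | succ m ih =>
    intro A hA K hKA hKcl v₀ hv₀A hv₀K
    classical
    by_cases hcomp : ∀ x ∈ A, ∀ y ∈ A, x ≠ y → G.Adj x y
    · exact ⟨v₀, ⟨hv₀A, fun x hx y hy _ _ hxy => hcomp x hx y hy hxy⟩, hv₀K⟩
    push_neg at hcomp
    obtain ⟨a, haA, b, hbA, hab, hnadj⟩ := hcomp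
    -- minimal separator
    set 𝒞 : Finset (Finset V) :=
      ((A.erase a).erase b).powerset.filter (fun C => ¬ SReach G (↑A \ ↑C) a b) with h𝒞
    have hfull : (A.erase a).erase b ∈ 𝒞 := by
      rw [h𝒞, Finset.mem_filter]
      refine ⟨Finset.mem_powerset_self _, fun hreach => ?_⟩
      have hsub : (↑A \ ↑((A.erase a).erase b) : Set V) ⊆ {a, b} := by
        intro x hx
        rcases hx with ⟨hxA, hxE⟩
        simp only [Finset.coe_erase, Set.mem_diff, Set.mem_singleton_iff, not_and, not_not,
          Finset.mem_coe] at hxE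
        by_cases h1 : x = a
        · exact Or.inl h1
        · right
          by_cases h2 : x = b
          · exact h2
          · exact absurd (hxE ⟨Finset.mem_coe.mp hxA, h1⟩) h2
      rcases hreach with ⟨haX, hrtg⟩
      rcases hrtg.cases_head with heq | ⟨c, hstep, _⟩
      · exact hab heq
      · rcases hsub hstep.1 with rfl | rfl
        · exact G.irrefl hstep.2
        · exact hnadj hstep.2
    obtain ⟨C, hC𝒞, hCmin⟩ := Finset.exists_min_image 𝒞 Finset.card ⟨_, hfull⟩
    rw [h𝒞, Finset.mem_filter, Finset.mem_powerset] at hC𝒞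
    obtain ⟨hCsub, hCsep⟩ := hC𝒞
    set X : Set V := ↑A \ ↑C with hX
    have hCA : C ⊆ A := hCsub.trans ((Finset.erase_subset _ _).trans (Finset.erase_subset _ _))
    have haX : a ∈ X := ⟨haA, fun haC => by
      have := hCsub haC
      rw [Finset.mem_erase] at this
      exact (Finset.mem_erase.mp this.2).1 rfl⟩
    have hbX : b ∈ X := ⟨hbA, fun hbC => by
      have := hCsub hbC
      rw [Finset.mem_erase] at this
      exact this.1 rfl⟩
    -- neighbors of separator vertices in each component
    have claim : ∀ p : V, p ∈ X → ∀ c ∈ C, ∀ y,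
        SReach G (↑A \ ↑(C.erase c)) p y →
        SReach G X p y ∨ ∃ z, SReach G X p z ∧ G.Adj z c := by
      intro p hpX c hc y hy
      have hpX' : p ∈ (↑A \ ↑(C.erase c) : Set V) :=
        ⟨hpX.1, fun hm => hpX.2 (Finset.mem_of_mem_erase hm)⟩
      rcases hy with ⟨_, hrtg⟩
      induction hrtg with
      | refl => exact Or.inl (SReach.refl hpX)
      | @tail u w hru hstep ihh =>
        rcases ihh with hl | hr
        · by_cases hwX : w ∈ X
          · exact Or.inl (hl.tail hwX hstep.2)
          · have hwc : w = c := by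
              have hwA : w ∈ A := hstep.1.1
              have hwC : w ∈ C := by
                by_contra hh
                exact hwX ⟨hwA, hh⟩
              have := hstep.1.2
              rw [Finset.coe_erase, Set.mem_diff] at this
              push_neg at this
              exact this (by exact_mod_cast hwC)
            exact Or.inr ⟨u, hl, hwc ▸ hstep.2⟩
        · exact Or.inr hr
    have neigh : ∀ p q : V, p ∈ X → q ∈ X → ¬ SReach G X p q →
        (∀ c ∈ C, SReach G (↑A \ ↑(C.erase c)) p q) →
        ∀ c ∈ C, ∃ z, SReach G X p z ∧ G.Adj c z := by
      intro p q hpX hqX hpq hre c hc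
      rcases claim p hpX c hc q (hre c hc) with hl | ⟨z, hz, hzc⟩
      · exact absurd hl hpq
      · exact ⟨z, hz, hzc.symm⟩
    have hre_ab : ∀ c ∈ C, SReach G (↑A \ ↑(C.erase c)) a b := by
      intro c hc
      by_contra hno
      have hmem : C.erase c ∈ 𝒞 := by
        rw [h𝒞, Finset.mem_filter, Finset.mem_powerset]
        exact ⟨(Finset.erase_subset _ _).trans hCsub, hno⟩
      have h1 := hCmin _ hmem
      have h2 : (C.erase c).card < C.card := Finset.card_erase_lt_of_mem hc
      omega
    have hCsepX : ¬ SReach G X a b := hCsep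
    have neighA : ∀ c ∈ C, ∃ z, SReach G X a z ∧ G.Adj c z :=
      neigh a b haX hbX hCsepX hre_ab
    have neighB : ∀ c ∈ C, ∃ z, SReach G X b z ∧ G.Adj c z :=
      neigh b a hbX haX (fun h => hCsepX h.symm) (fun c hc => (hre_ab c hc).symm)
    -- the two components
    set Acomp : Set V := {v | SReach G X a v} with hAc
    set Bcomp : Set V := {v | SReach G X b v} with hBc
    have hdisj : ∀ z, z ∈ Acomp → z ∈ Bcomp → False := by
      intro z hza hzb
      exact hCsepX (SReach.trans hza (SReach.symm hzb))
    have hacomp_sub : ∀ z, z ∈ Acomp → z ∈ X := fun z hz => SReach.mem_right hz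
    have hbcomp_sub : ∀ z, z ∈ Bcomp → z ∈ X := fun z hz => SReach.mem_right hz
    have hnadjAB : ∀ x ∈ Acomp, ∀ y ∈ Bcomp, ¬ G.Adj x y ∧ x ≠ y := by
      intro x hx y hy
      constructor
      · intro hadj
        exact hdisj y (SReach.tail hx (hbcomp_sub y hy) hadj) hy
      · intro h
        exact hdisj x hx (h ▸ hy)
    -- C is a clique
    have hclique : ∀ c₁ ∈ C, ∀ c₂ ∈ C, c₁ ≠ c₂ → G.Adj c₁ c₂ := by
      intro c₁ hc₁ c₂ hc₂ hcne
      by_contra hcadj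
      have hc₁X : c₁ ∉ X := fun h => h.2 hc₁
      have hc₂X : c₂ ∉ X := fun h => h.2 hc₂
      have hwalk : ∀ (d₁ d₂ : V) (comp : Set V) (p : V), (∀ z, z ∈ comp → z ∈ X) →
          (∃ z, SReach G X p z ∧ G.Adj d₁ z) → (∃ z, SReach G X p z ∧ G.Adj d₂ z) →
          (∀ v w, SReach G X p v → SReach G X p w → SReach G comp v w) →
          ∃ k g, FWalk G comp d₁ d₂ k g := by
        intro d₁ d₂ comp p hsub ⟨z₁, hz₁, hadj₁⟩ ⟨z₂, hz₂, hadj₂⟩ hcon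
        obtain ⟨k, g, ⟨hg0, hgk, hgadj, hgint⟩, hall⟩ := SReach.exists_fwalk (hcon z₁ z₂ hz₁ hz₂)
        refine ⟨k + 2, fun t => if t = 0 then d₁ else if t ≤ k + 1 then g (t - 1) else d₂,
          ?_, ?_, ?_, ?_⟩ <;> dsimp only
        · simp
        · rw [if_neg (by omega), if_neg (by omega)]
        · intro i hi
          by_cases h0 : i = 0
          · subst h0
            rw [if_pos rfl, if_neg (by omega), if_pos (by omega)]
            simpa [hg0] using hadj₁
          · by_cases h1 : i ≤ k
            · rw [if_neg h0, if_pos (by omega), if_neg (by omega), if_pos (by omega),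
                show i + 1 - 1 = (i - 1) + 1 by omega]
              exact hgadj (i - 1) (by omega)
            · have hik : i = k + 1 := by omega
              subst hik
              rw [if_neg h0, if_pos (le_refl _), if_neg (by omega), if_neg (by omega),
                show k + 1 - 1 = k by omega, hgk]
              exact hadj₂.symm
        · intro i h0 hik
          rw [if_neg (by omega), if_pos (by omega)]
          exact hall (i - 1) (by omega)
      have hconA : ∀ v w, SReach G X a v → SReach G X a w → SReach G Acomp v w :=
        fun v w hv hw => (SReach.symm (SReach.strengthen hv)).trans (SReach.strengthen hw)
      have hconB : ∀ v w, SReach G X b v → SReach G X b w → SReach G Bcomp v w :=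
        fun v w hv hw => (SReach.symm (SReach.strengthen hv)).trans (SReach.strengthen hw)
      obtain ⟨kA, gA, hwA⟩ := hwalk c₁ c₂ Acomp a hacomp_sub (neighA c₁ hc₁) (neighA c₂ hc₂) hconA
      obtain ⟨kB, gB, hwB⟩ := hwalk c₂ c₁ Bcomp b hbcomp_sub (neighB c₂ hc₂) (neighB c₁ hc₁) hconB
      have hc₁A : c₁ ∉ Acomp := fun h => hc₁X (hacomp_sub _ h)
      have hc₂A : c₂ ∉ Acomp := fun h => hc₂X (hacomp_sub _ h)
      have hc₁B : c₁ ∉ Bcomp := fun h => hc₁X (hbcomp_sub _ h)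
      have hc₂B : c₂ ∉ Bcomp := fun h => hc₂X (hbcomp_sub _ h)
      obtain ⟨k₁, g₁, hw1, hk1, hch1, hinj1⟩ :=
        exists_min_fwalk hcne hcadj hc₁A hc₂A ⟨kA, gA, hwA⟩
      obtain ⟨k₂, g₂, hw2, hk2, hch2, hinj2⟩ :=
        exists_min_fwalk (Ne.symm hcne) (fun h => hcadj h.symm) hc₂B hc₁B ⟨kB, gB, hwB⟩
      exact hG (cycle_of_two_fwalks hnadjAB hc₂A hc₁B hcne hcadj
        hw1 hk1 hch1 hinj1 hw2 hk2 hch2 hinj2)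
    -- the K-free side
    have side : ∀ p q : V, p ∈ X → q ∈ X → ¬ SReach G X p q →
        (∀ x ∈ K, x ∉ ({v | SReach G X p v} : Set V)) →
        ∃ v, SimpIn G A v ∧ v ∉ K := by
      intro p q hpX hqX hpq hKfree
      set A' : Finset V := A.filter (fun x => SReach G X p x) ∪ C with hA'
      have hA'A : A' ⊆ A := by
        intro x hx
        rcases Finset.mem_union.mp hx with h | h
        · exact Finset.mem_of_mem_filter _ h
        · exact hCA h
      have hqA' : q ∉ A' := by
        intro hq
        rcases Finset.mem_union.mp hq with h | h
        · exact hpq (Finset.mem_filter.mp h).2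
        · exact hqX.2 h
      have hcard : A'.card ≤ m := by
        have h1 : A' ⊂ A := ⟨hA'A, fun h => hqA' (h hqX.1)⟩
        have := Finset.card_lt_card h1
        omega
      have hCsubA' : C ⊆ A' := Finset.subset_union_right
      have hpA' : p ∈ A' := Finset.mem_union_left _
        (Finset.mem_filter.mpr ⟨hpX.1, SReach.refl hpX⟩)
      have hpC : p ∉ C := hpX.2
      obtain ⟨v, ⟨hvA', hvsimp⟩, hvC⟩ := ih A' hcard C hCsubA' hclique p hpA' hpC
      have hvreach : SReach G X p v := by
        rcases Finset.mem_union.mp hvA' with h | h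
        · exact (Finset.mem_filter.mp h).2
        · exact absurd h hvC
      have hnbr : ∀ x, x ∈ A → G.Adj v x → x ∈ A' := by
        intro x hxA hadjx
        by_cases hxC : x ∈ C
        · exact hCsubA' hxC
        · exact Finset.mem_union_left _
            (Finset.mem_filter.mpr ⟨hxA, hvreach.tail ⟨hxA, hxC⟩ hadjx⟩)
      refine ⟨v, ⟨hA'A hvA', fun x hx y hy hax hay hxy =>
        hvsimp x (hnbr x hx hax) y (hnbr y hy hay) hax hay hxy⟩, ?_⟩
      intro hvK
      exact hKfree v hvK hvreach
    -- K misses one of the two components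
    by_cases hKAc : ∀ x ∈ K, x ∉ Acomp
    · exact side a b haX hbX hCsepX hKAc
    · push_neg at hKAc
      obtain ⟨x₀, hx₀K, hx₀A⟩ := hKAc
      have hKBc : ∀ x ∈ K, x ∉ Bcomp := by
        intro y hyK hyB
        by_cases hxy : x₀ = y
        · exact hdisj y (hxy ▸ hx₀A) hyB
        · have hadj := hKcl x₀ hx₀K y hyK hxy
          exact hdisj y (SReach.tail hx₀A (hbcomp_sub y hyB) hadj) hyB
      exact side b a hbX haX (fun h => hCsepX h.symm) hKBc

lemma exists_simplicial [Finite V] [Nonempty V] (hG : Chordal G) :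
    ∃ v : V, ∀ x y, G.Adj v x → G.Adj v y → x ≠ y → G.Adj x y := by
  classical
  haveI := Fintype.ofFinite V
  obtain ⟨v, ⟨_, hsimp⟩, _⟩ := dirac_aux hG (Fintype.card V) Finset.univ le_rfl ∅
    (Finset.empty_subset _) (by simp) (Classical.arbitrary V) (Finset.mem_univ _)
    (Finset.notMem_empty _)
  exact ⟨v, fun x y => hsimp x (Finset.mem_univ x) y (Finset.mem_univ y)⟩

lemma cycle_transfer {V₁ V₂ : Type u} {G₁ : SimpleGraph V₁} {G₂ : SimpleGraph V₂}
    (e : V₁ → V₂) (he : Function.Injective e)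
    (hadj : ∀ a b, G₂.Adj (e a) (e b) ↔ G₁.Adj a b) :
    HasLongInducedCycle G₁ → HasLongInducedCycle G₂ := by
  rintro ⟨n, hn, f, hf, ha⟩
  exact ⟨n, hn, e ∘ f, he.comp hf, fun i j => (hadj _ _).trans (ha i j)⟩

/-- the key "leaf point" lemma -/
lemma key_lemma {W : Type u} [Finite W] (F : Set (Set W)) (hch : ChordalProp F)
    (hhelly : FiniteHelly F) (hW : ∃ w u : W, w ≠ u) :
    ∃ w u : W, u ≠ w ∧ ∀ S ∈ F, w ∈ S → (∃ x ∈ S, x ≠ w) → u ∈ S := by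
  classical
  set F' : Set (Set W) := {S | S ∈ F ∧ ∃ x ∈ S, ∃ y ∈ S, x ≠ y} with hF'def
  by_cases hF' : F'.Nonempty
  · -- chordality of IntGraph F'
    have hchF' : Chordal (IntGraph F') := by
      intro hcyc
      apply hch
      refine cycle_transfer (fun S => ⟨S.1, S.2.1⟩) ?_ ?_ hcyc
      · intro S T h
        have h2 := congrArg Subtype.val h
        exact Subtype.ext h2
      · intro a b
        constructor
        · rintro ⟨hne, hint⟩
          exact ⟨fun h => hne (by rw [h]), hint⟩
        · rintro ⟨hne, hint⟩
          refine ⟨fun h => hne ?_, hint⟩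
          have h2 := congrArg Subtype.val h
          exact Subtype.ext h2
    haveI : Nonempty ↥F' := hF'.to_subtype
    obtain ⟨S₀, hS₀simp⟩ := exists_simplicial (G := IntGraph F') hchF'
    -- the closed neighborhood of S₀ in F'
    have hfin : ({T | T ∈ F' ∧ ((T : Set W) ∩ ↑S₀).Nonempty}).Finite := Set.toFinite _
    set R : Finset (Set W) := hfin.toFinset with hRdef
    have hmemR : ∀ T, T ∈ R ↔ (T ∈ F' ∧ ((T : Set W) ∩ ↑S₀).Nonempty) := by
      intro T
      rw [hRdef, Set.Finite.mem_toFinset]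
      exact Iff.rfl
    obtain ⟨x₀, hx₀S₀, y₀, hy₀S₀, hxy₀⟩ := (S₀.2).2
    have hS₀R : (S₀ : Set W) ∈ R := (hmemR _).mpr ⟨S₀.2, ⟨x₀, hx₀S₀, hx₀S₀⟩⟩
    have hpair : ∀ S ∈ R, ∀ T ∈ R, S ≠ T → (S ∩ T).Nonempty := by
      intro S hS T hT hST
      rw [hmemR] at hS hT
      by_cases h1 : S = ↑S₀
      · rw [h1, Set.inter_comm]
        exact hT.2
      · by_cases h2 : T = ↑S₀
        · rw [h2]
          exact hS.2
        · have hadj1 : (IntGraph F').Adj S₀ ⟨S, hS.1⟩ :=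
            ⟨fun h => h1 (congrArg Subtype.val h).symm, by rw [Set.inter_comm]; exact hS.2⟩
          have hadj2 : (IntGraph F').Adj S₀ ⟨T, hT.1⟩ :=
            ⟨fun h => h2 (congrArg Subtype.val h).symm, by rw [Set.inter_comm]; exact hT.2⟩
          have := hS₀simp _ _ hadj1 hadj2 (fun h => hST (congrArg Subtype.val h))
          exact this.2
    have hRF : ↑R ⊆ F := by
      intro S hS
      rw [Finset.mem_coe, hmemR] at hS
      exact hS.1.1
    obtain ⟨p, hp⟩ := hhelly R ⟨_, hS₀R⟩ hRF hpair
    have hpmem : ∀ S ∈ R, p ∈ S := by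
      intro S hS
      exact Set.mem_iInter₂.mp hp S hS
    have hpS₀ : p ∈ (S₀ : Set W) := hpmem _ hS₀R
    -- pick w ∈ S₀ with w ≠ p
    obtain ⟨w, hwS₀, hwp⟩ : ∃ w ∈ (S₀ : Set W), w ≠ p := by
      by_cases h : x₀ = p
      · exact ⟨y₀, hy₀S₀, fun hy => hxy₀ (h.trans hy.symm)⟩
      · exact ⟨x₀, hx₀S₀, h⟩
    refine ⟨w, p, fun h => hwp h.symm, ?_⟩
    intro S hS hwS ⟨z, hzS, hzw⟩
    have hSF' : S ∈ F' := ⟨hS, z, hzS, w, hwS, hzw⟩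
    have hSR : S ∈ R := (hmemR _).mpr ⟨hSF', ⟨w, hwS, hwS₀⟩⟩
    exact hpmem S hSR
  · obtain ⟨w, u, hwu⟩ := hW
    refine ⟨w, u, hwu.symm, ?_⟩
    intro S hS hwS ⟨x, hxS, hxw⟩
    exact absurd ⟨hS, x, hxS, w, hwS, hxw⟩ (fun h => hF' ⟨S, h⟩)

lemma connected_of_subsingleton {α : Type u} [Subsingleton α] [Nonempty α]
    (G : SimpleGraph α) : G.Connected := by
  rw [SimpleGraph.connected_iff]
  exact ⟨fun x y => by rw [Subsingleton.elim x y], inferInstance⟩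

section Leaf
variable {W : Type u} (w u : W)

/-- extend a graph on `W \ {w}` by the leaf `w` attached at `u` -/
def extendLeaf (hne : u ≠ w) (T' : SimpleGraph {x : W // x ≠ w}) : SimpleGraph W where
  Adj x y := (∃ hx : x ≠ w, ∃ hy : y ≠ w, T'.Adj ⟨x, hx⟩ ⟨y, hy⟩) ∨
    (x = w ∧ y = u) ∨ (x = u ∧ y = w)
  symm := by
    constructor
    rintro x y (⟨hx, hy, h⟩ | ⟨h1, h2⟩ | ⟨h1, h2⟩)
    · exact Or.inl ⟨hy, hx, h.symm⟩
    · exact Or.inr (Or.inr ⟨h2, h1⟩)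
    · exact Or.inr (Or.inl ⟨h2, h1⟩)
  loopless := by
    constructor
    rintro x (⟨hx, hy, h⟩ | ⟨h1, h2⟩ | ⟨h1, h2⟩)
    · exact T'.loopless.irrefl _ h
    · exact hne (h2.symm.trans h1)
    · exact hne (h1.symm.trans h2)

variable {w u} (hne : u ≠ w) (T' : SimpleGraph {x : W // x ≠ w})

def leafHom : T' →g extendLeaf w u hne T' where
  toFun := Subtype.val
  map_rel' := by
    intro a b h
    exact Or.inl ⟨a.2, b.2, h⟩

lemma extendLeaf_adj_w {y : W} (h : (extendLeaf w u hne T').Adj w y) : y = u := by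
  rcases h with ⟨hx, _, _⟩ | ⟨_, h2⟩ | ⟨h1, _⟩
  · exact absurd rfl hx
  · exact h2
  · exact absurd h1.symm hne

lemma extendLeaf_isTree [Nonempty W] (hT' : T'.IsTree) :
    (extendLeaf w u hne T').IsTree := by
  classical
  set T := extendLeaf w u hne T' with hT
  have hAdjwu : T.Adj w u := Or.inr (Or.inl ⟨rfl, rfl⟩)
  constructor
  · -- connected
    have hreach : ∀ x : W, T.Reachable x u := by
      intro x
      by_cases hx : x = w
      · rw [hx]
        exact hAdjwu.reachable
      · exact (hT'.isConnected.preconnected ⟨x, hx⟩ ⟨u, hne⟩).map (leafHom hne T')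
    rw [SimpleGraph.connected_iff]
    exact ⟨fun x y => (hreach x).trans (hreach y).symm, inferInstance⟩
  · -- acyclic
    intro v c hcyc
    by_cases hw : w ∈ c.support
    · -- rotate the cycle to start at w; its two end edges at w coincide
      have hcyc' := hcyc.rotate hw
      set c' := c.rotate w hw with hc'
      clear_value c'
      cases c' with
      | nil => exact (SimpleGraph.Walk.isCycle_def _).mp hcyc' |>.2.1 rfl
      | cons h p =>
        rename_i x
        have hxu : x = u := extendLeaf_adj_w hne T' h
        obtain ⟨z, hz, q, hq⟩ := SimpleGraph.Walk.exists_eq_cons_of_ne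
          (show w ≠ x from fun h' => hne (hxu ▸ h'.symm)) p.reverse
        have hzu : z = u := extendLeaf_adj_w hne T' hz
        have hmem : s(w, z) ∈ p.edges := by
          have h1 : s(w, z) ∈ p.reverse.edges := by
            rw [hq, SimpleGraph.Walk.edges_cons]
            exact List.mem_cons_self
          rwa [SimpleGraph.Walk.edges_reverse, List.mem_reverse] at h1
        rw [hzu, ← hxu] at hmem
        have hnodup := hcyc'.edges_nodup
        rw [SimpleGraph.Walk.edges_cons, List.nodup_cons] at hnodup
        exact hnodup.1 hmem
    · -- lift the cycle to T'
      have hv : v ≠ w := fun h => hw (h ▸ c.start_mem_support)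
      have lift : ∀ {x y : W} (p : T.Walk x y) (hx : x ≠ w) (hy : y ≠ w),
          (∀ z ∈ p.support, z ≠ w) →
          ∃ q : T'.Walk ⟨x, hx⟩ ⟨y, hy⟩, q.map (leafHom hne T') = p := by
        intro x y p
        induction p with
        | nil =>
          intro hx hy _
          exact ⟨SimpleGraph.Walk.nil, rfl⟩
        | @cons x' z y' h p ih =>
          intro hx hy hsup
          have hz : z ≠ w := hsup z (by simp)
          have hadj : T'.Adj ⟨x', hx⟩ ⟨z, hz⟩ := by
            rcases h with ⟨hx2, hz2, hadj⟩ | ⟨h1, _⟩ | ⟨_, h2⟩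
            · exact hadj
            · exact absurd h1 hx
            · exact absurd h2 hz
          obtain ⟨q, hq⟩ := ih hz hy (fun z' hz' => hsup z' (by simp [hz']))
          exact ⟨SimpleGraph.Walk.cons hadj q, by simp [SimpleGraph.Walk.map_cons, hq]; rfl⟩
      obtain ⟨q, hq⟩ := lift c hv hv (fun z hz => fun h => hw (h ▸ hz))
      rw [← hq] at hcyc
      have hinj : Function.Injective (leafHom hne T') := Subtype.val_injective
      exact hT'.IsAcyclic q ((SimpleGraph.Walk.map_isCycle_iff_of_injective hinj).mp hcyc)
lemma extendLeaf_adj_wu : (extendLeaf w u hne T').Adj w u := Or.inr (Or.inl ⟨rfl, rfl⟩)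

end Leaf

lemma main_aux : ∀ (n : ℕ) (W : Type u) [Finite W] [Nonempty W], Nat.card W ≤ n →
    ∀ F : Set (Set W), ChordalProp F → FiniteHelly F →
    ∃ T : SimpleGraph W, T.IsTree ∧ ∀ S ∈ F, (T.induce S).Connected := by
  intro n
  induction n with
  | zero =>
    intro W _ _ hcard F _ _
    exfalso
    have := Nat.card_pos (α := W)
    omega
  | succ n ih =>
    intro W _ _ hcard F hch hhelly
    classical
    have hSne : ∀ S ∈ F, S.Nonempty := by
      intro S hS
      have h := hhelly {S} (by simp) (by simpa using hS) ?_
      · simpa using h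
      · intro a ha b hb hab
        rw [Finset.mem_singleton] at ha hb
        exact absurd (ha.trans hb.symm) hab
    by_cases hsmall : Nat.card W ≤ n
    · exact ih W hsmall F hch hhelly
    by_cases htriv : Nontrivial W
    case neg =>
      haveI : Subsingleton W := not_nontrivial_iff_subsingleton.mp htriv
      refine ⟨⊥, ⟨connected_of_subsingleton ⊥, SimpleGraph.isAcyclic_bot⟩, ?_⟩
      intro S hS
      haveI : Nonempty ↥S := (hSne S hS).to_subtype
      exact connected_of_subsingleton _
    case pos =>
      obtain ⟨w, p, hpw, hwp⟩ := key_lemma F hch hhelly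
        (by obtain ⟨a, b, hab⟩ := htriv; exact ⟨a, b, hab⟩)
      haveI : Nonempty {x : W // x ≠ w} := ⟨⟨p, hpw⟩⟩
      have hcard' : Nat.card {x : W // x ≠ w} ≤ n := by
        haveI := Fintype.ofFinite W
        have h1 : Nat.card W = Fintype.card W := Nat.card_eq_fintype_card
        have h2 : Nat.card {x : W // x ≠ w} = Fintype.card {x : W // ¬ x = w} :=
          Nat.card_eq_fintype_card
        have h3 : Fintype.card {x : W // ¬ x = w} = Fintype.card W - Fintype.card {x : W // x = w} :=
          Fintype.card_subtype_compl _
        have h4 : Fintype.card {x : W // x = w} = 1 := Fintype.card_subtype_eq w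
        have h5 : 0 < Fintype.card W := Fintype.card_pos
        omega
      -- the projected family
      set π : Set W → Set {x : W // x ≠ w} := fun S => {x | ↑x ∈ S} with hπ
      set F' : Set (Set {x : W // x ≠ w}) :=
        {S' | ∃ S, S ∈ F ∧ S' = π S ∧ S'.Nonempty} with hF'
      -- intersection transfer
      have hsec : ∀ S T, S ∈ F → T ∈ F → (π S).Nonempty → (π T).Nonempty →
          ((S ∩ T).Nonempty ↔ ((π S) ∩ (π T)).Nonempty) := by
        intro S T hS hT hSne' hTne'
        constructor
        · rintro ⟨q, hqS, hqT⟩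
          by_cases hq : q = w
          · have huS : p ∈ S := hwp S hS (hq ▸ hqS)
              (by obtain ⟨x, hx⟩ := hSne'; exact ⟨x.1, hx, x.2⟩)
            have huT : p ∈ T := hwp T hT (hq ▸ hqT)
              (by obtain ⟨x, hx⟩ := hTne'; exact ⟨x.1, hx, x.2⟩)
            exact ⟨⟨p, hpw⟩, huS, huT⟩
          · exact ⟨⟨q, hq⟩, hqS, hqT⟩
        · rintro ⟨x, hxS, hxT⟩
          exact ⟨x.1, hxS, hxT⟩
      -- representatives
      have hrep : ∀ S' : ↥F', ∃ S, S ∈ F ∧ (S' : Set {x : W // x ≠ w}) = π S ∧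
          (S' : Set {x : W // x ≠ w}).Nonempty := by
        intro S'
        obtain ⟨S, h1, h2, h3⟩ := S'.2
        exact ⟨S, h1, h2, h3⟩
      choose L hLF hLπ hLne using hrep
      have hπLne : ∀ S' : ↥F', (π (L S')).Nonempty := by
        intro S'
        rw [← hLπ S']
        exact hLne S'
      have hch' : ChordalProp F' := by
        intro hcyc
        apply hch
        refine cycle_transfer (fun S' => ⟨L S', hLF S'⟩) ?_ ?_ hcyc
        · intro a b hab
          have h2 := congrArg Subtype.val hab
          apply Subtype.ext
          rw [hLπ a, hLπ b]
          exact congrArg π h2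
        · intro a b
          constructor
          · rintro ⟨hne', hint⟩
            refine ⟨fun h => hne' (by rw [h]), ?_⟩
            have h2 := (hsec (L a) (L b) (hLF a) (hLF b) (hπLne a) (hπLne b)).mp hint
            rw [← hLπ a, ← hLπ b] at h2
            exact h2
          · rintro ⟨hne', hint⟩
            constructor
            · intro h
              apply hne'
              apply Subtype.ext
              have h2 := congrArg Subtype.val h
              rw [hLπ a, hLπ b]
              exact congrArg π h2
            · apply (hsec (L a) (L b) (hLF a) (hLF b) (hπLne a) (hπLne b)).mpr
              rw [hLπ a, hLπ b] at hint
              exact hint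
      have hhelly' : FiniteHelly F' := by
        intro R' hR'ne hR'F hR'pair
        set f : {x // x ∈ R'} → Set W := fun x => L ⟨x.1, hR'F (Finset.mem_coe.mpr x.2)⟩ with hf
        set R : Finset (Set W) := R'.attach.image f with hR
        have hmemR : ∀ S' : ↥F', (S' : Set _) ∈ R' → L S' ∈ R := by
          intro S' hS'
          rw [hR, Finset.mem_image]
          exact ⟨⟨S', hS'⟩, Finset.mem_attach _ _, rfl⟩
        have hRF : ↑R ⊆ F := by
          intro S hS
          rw [Finset.mem_coe, hR, Finset.mem_image] at hS
          obtain ⟨x, _, rfl⟩ := hS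
          exact hLF _
        have hRpair : ∀ S ∈ R, ∀ T ∈ R, S ≠ T → (S ∩ T).Nonempty := by
          intro S hS T hT hST
          rw [hR, Finset.mem_image] at hS hT
          obtain ⟨x, hx, rfl⟩ := hS
          obtain ⟨y, hy, rfl⟩ := hT
          have hxy : x.1 ≠ y.1 := by
            intro h
            exact hST (congrArg f (Subtype.ext h))
          apply (hsec _ _ (hLF _) (hLF _) (hπLne _) (hπLne _)).mpr
          obtain ⟨z, hz1, hz2⟩ := hR'pair x.1 x.2 y.1 y.2 hxy
          refine ⟨z, ?_, ?_⟩
          · rw [← hLπ]; exact hz1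
          · rw [← hLπ]; exact hz2
        obtain ⟨q, hq⟩ := hhelly R (hR'ne.attach.image f) hRF hRpair
        have hqall : ∀ S' : ↥F', (S' : Set _) ∈ R' → q ∈ L S' := by
          intro S' hS'
          exact Set.mem_iInter₂.mp hq _ (hmemR S' hS')
        obtain ⟨c, hc⟩ : ∃ c : {x : W // x ≠ w}, ∀ S' : ↥F',
            (S' : Set _) ∈ R' → (c : W) ∈ L S' := by
          by_cases hqw : q = w
          · refine ⟨⟨p, hpw⟩, fun S' hS' => ?_⟩
            apply hwp (L S') (hLF S')
            · rw [← hqw]; exact hqall S' hS'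
            · obtain ⟨x, hx⟩ := hπLne S'
              exact ⟨x.1, hx, x.2⟩
          · exact ⟨⟨q, hqw⟩, fun S' hS' => hqall S' hS'⟩
        refine ⟨c, Set.mem_iInter₂.mpr ?_⟩
        intro S' hS'
        have hS'F' : S' ∈ F' := hR'F (Finset.mem_coe.mpr hS')
        have := hc ⟨S', hS'F'⟩ hS'
        have hLπ' := hLπ ⟨S', hS'F'⟩
        rw [show S' = π (L ⟨S', hS'F'⟩) from hLπ']
        exact this
      -- apply the induction hypothesis
      obtain ⟨T', hT'tree, hT'conn⟩ := ih {x : W // x ≠ w} hcard' F' hch' hhelly'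
      refine ⟨extendLeaf w p hpw T', extendLeaf_isTree hpw T' hT'tree, ?_⟩
      intro S hS
      set T := extendLeaf w p hpw T' with hTdef
      have mapreach : ∀ (z₁ z₂ : ↥(π S)), (T'.induce (π S)).Reachable z₁ z₂ →
          (T.induce S).Reachable ⟨z₁.1.1, z₁.2⟩ ⟨z₂.1.1, z₂.2⟩ := by
        intro z₁ z₂ h
        let e : (T'.induce (π S)) →g (T.induce S) :=
          ⟨fun z => ⟨z.1.1, z.2⟩, fun {a b} hab => Or.inl ⟨a.1.2, b.1.2, hab⟩⟩
        exact h.map e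
      haveI : Nonempty ↥S := (hSne S hS).to_subtype
      rw [SimpleGraph.connected_iff]
      refine ⟨?_, inferInstance⟩
      by_cases hwS : w ∈ S
      · by_cases hS1 : ∃ x ∈ S, x ≠ w
        · have hpS : p ∈ S := hwp S hS hwS hS1
          have hS'F' : π S ∈ F' := ⟨S, hS, rfl,
            by obtain ⟨x, hx, hxw⟩ := hS1; exact ⟨⟨x, hxw⟩, hx⟩⟩
          have hconn' := hT'conn (π S) hS'F'
          have hub : ∀ z : ↥S, (T.induce S).Reachable z ⟨p, hpS⟩ := by
            rintro ⟨x, hxS⟩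
            by_cases hx : x = w
            · subst hx
              exact SimpleGraph.Adj.reachable (extendLeaf_adj_wu hpw T')
            · exact mapreach ⟨⟨x, hx⟩, hxS⟩ ⟨⟨p, hpw⟩, hpS⟩
                (hconn'.preconnected ⟨⟨x, hx⟩, hxS⟩ ⟨⟨p, hpw⟩, hpS⟩)
          exact fun z₁ z₂ => (hub z₁).trans (hub z₂).symm
        · push_neg at hS1
          haveI : Subsingleton ↥S :=
            ⟨fun a b => Subtype.ext ((hS1 a.1 a.2).trans (hS1 b.1 b.2).symm)⟩
          exact (connected_of_subsingleton (T.induce S)).preconnected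
      · have hS'F' : π S ∈ F' := ⟨S, hS, rfl,
          by obtain ⟨x, hxS⟩ := hSne S hS; exact ⟨⟨x, fun h => hwS (h ▸ hxS)⟩, hxS⟩⟩
        have hconn' := hT'conn (π S) hS'F'
        rintro ⟨x, hxS⟩ ⟨y, hyS⟩
        have hx : x ≠ w := fun h => hwS (h ▸ hxS)
        have hy : y ≠ w := fun h => hwS (h ▸ hyS)
        exact mapreach ⟨⟨x, hx⟩, hxS⟩ ⟨⟨y, hy⟩, hyS⟩
          (hconn'.preconnected ⟨⟨x, hx⟩, hxS⟩ ⟨⟨y, hy⟩, hyS⟩)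


end MyCore

/-- Finite case: a family of subsets of a finite set with the chordal property and the
finite Helly property is the family of vertex sets of subtrees of some tree on `W`. -/
theorem stmt4 {W : Type u} [Finite W] [Nonempty W] (F : Set (Set W))
    (hchordal : ChordalProp F) (hhelly : FiniteHelly F) :
    ∃ T : SimpleGraph W, T.IsTree ∧ ∀ S ∈ F, (T.induce S).Connected := by
  exact MyCore.main_aux (Nat.card W) W le_rfl F hchordal hhelly
end

section
/- Let F be a family of subsets of a set W such that no element of W belongs to infinitely many infinite members of F. Then F is well-founded: there is no sequence (S_i : i ≥ 1) of members of F such that S₁ ∩ S₂ ∩ ⋯ ≠ ∅ and S₁ ∩ ⋯ ∩ S_i ⊄ S_{i+1} for each i ≥ 1. -/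
open Set

universe u

/-- If no element of `W` belongs to infinitely many infinite members of `F`,
then `F` is well-founded. -/
theorem stmt5 {W : Type u} (F : Set (Set W))
    (h : ∀ x : W, {S : Set W | S ∈ F ∧ x ∈ S ∧ S.Infinite}.Finite) :
    WellFoundedFamily F := by
  rintro ⟨S, hF, ⟨x, hx⟩, hnot⟩
  simp only [mem_iInter] at hx
  set P : ℕ → Set W := fun i => ⋂ j ≤ i, S j with hP
  have hPsub : ∀ i j, j ≤ i → P i ⊆ S j := by
    intro i j hj y hy
    simp only [hP, mem_iInter] at hy
    exact hy j hj
  have hmono : ∀ i, P (i + 1) ⊆ P i := by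
    intro i y hy
    simp only [hP, mem_iInter] at hy ⊢
    exact fun j hj => hy j (hj.trans (Nat.le_succ i))
  have hssub : ∀ i, P (i + 1) ⊂ P i := by
    intro i
    refine ⟨hmono i, fun hsub => hnot i ?_⟩
    exact fun y hy => hPsub (i + 1) (i + 1) le_rfl (hsub hy)
  have hPanti : ∀ i j, i ≤ j → P j ⊆ P i := by
    intro i j hij
    induction hij with
    | refl => exact le_rfl
    | step h ih => exact (hmono _).trans ih
  -- every P i is infinite
  have hPinf : ∀ i, (P i).Infinite := by
    intro i
    by_contra hfin
    rw [Set.not_infinite] at hfin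
    have hfin' : ∀ n, (P (i + n)).Finite :=
      fun n => hfin.subset (hPanti i (i + n) (Nat.le_add_right i n))
    have hstep : ∀ n, (P (i + (n + 1))).ncard < (P (i + n)).ncard := by
      intro n
      exact Set.ncard_lt_ncard (hssub (i + n)) (hfin' n)
    have hb : ∀ n, (P (i + n)).ncard + n ≤ (P i).ncard := by
      intro n
      induction n with
      | zero => simp
      | succ k ih => have := hstep k; omega
    have := hb ((P i).ncard + 1)
    omega
  have hSinf : ∀ i, (S i).Infinite := fun i =>
    (hPinf i).mono (hPsub i i le_rfl)
  -- S is injective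
  have hinj : Function.Injective S := by
    have key : ∀ i j, i < j → S i ≠ S j := by
      intro i j hij heq
      obtain ⟨k, rfl⟩ := Nat.exists_eq_add_of_lt hij
      apply hnot (i + k)
      have : P (i + k) ⊆ S i := hPsub (i + k) i (Nat.le_add_right i k)
      rw [heq] at this
      exact this
    intro i j heq
    rcases lt_trichotomy i j with h | h | h
    · exact absurd heq (key i j h)
    · exact h
    · exact absurd heq.symm (key j i h)
  have : {T : Set W | T ∈ F ∧ x ∈ T ∧ T.Infinite}.Infinite :=
    Set.infinite_of_injective_forall_mem hinj
      (fun i => ⟨hF i, hx i, hSinf i⟩)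
  exact this (h x)
end

section
/- Let F be a family of subsets of W with the chordal property and the finite Helly property, and let T be a tree with vertex set W all of whose edges {u,v} satisfy {u,v} ∈ F. Then every member S of F induces a connected subgraph of T. -/
open Set

universe u

/-- For a path, `getVert` is injective on indices up to the length. -/
lemma path_getVert_inj {V : Type u} {G : SimpleGraph V} {u v : V} {p : G.Walk u v}
    (hp : p.IsPath) :
    ∀ i ≤ p.length, ∀ j ≤ p.length, p.getVert i = p.getVert j → i = j := by
  induction p with
  | nil => intro i hi j hj _; simp at hi hj; omega
  | cons h q ih =>
    rw [SimpleGraph.Walk.cons_isPath_iff] at hp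
    intro i hi j hj heq
    match i, j with
    | 0, 0 => rfl
    | 0, j + 1 =>
      exfalso
      apply hp.2
      rw [SimpleGraph.Walk.mem_support_iff_exists_getVert]
      refine ⟨j, ?_, by simp at hj; omega⟩
      rw [SimpleGraph.Walk.getVert_cons_succ] at heq
      rw [← heq, SimpleGraph.Walk.getVert_zero]
    | i + 1, 0 =>
      exfalso
      apply hp.2
      rw [SimpleGraph.Walk.mem_support_iff_exists_getVert]
      refine ⟨i, ?_, by simp at hi; omega⟩
      rw [SimpleGraph.Walk.getVert_cons_succ] at heq
      rw [heq, SimpleGraph.Walk.getVert_zero]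
    | i + 1, j + 1 =>
      rw [SimpleGraph.Walk.getVert_cons_succ, SimpleGraph.Walk.getVert_cons_succ] at heq
      simp only [SimpleGraph.Walk.length_cons] at hi hj
      have := ih hp.1 i (by omega) j (by omega) heq
      omega

/-- A walk whose support lies in `S` yields reachability in the induced graph. -/
lemma reach_induce {V : Type u} {G : SimpleGraph V} {S : Set V} {v : V} (hv : v ∈ S) :
    ∀ (u : V) (r : G.Walk u v), (∀ z, z ∈ r.support → z ∈ S) →
      ∀ (hu : u ∈ S), (G.induce S).Reachable ⟨u, hu⟩ ⟨v, hv⟩ := by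
  intro u r
  induction r with
  | nil => intro _ hu; exact SimpleGraph.Reachable.refl _
  | @cons u' v' _ h q ih =>
    intro hmem hu
    have hv' : v' ∈ S := hmem v' (by simp)
    have hmem' : ∀ z, z ∈ q.support → z ∈ S := fun z hz =>
      hmem z (by simp [hz])
    have hadj : (G.induce S).Adj ⟨u', hu⟩ ⟨v', hv'⟩ := by
      simp only [SimpleGraph.comap_adj, Function.Embedding.coe_subtype]
      exact h
    exact hadj.reachable.trans (ih hv hmem' hv')

/-- The key combinatorial lemma: there can be no "gap" — a sequence of adjacent,
pairwise distinct vertices whose endpoints lie in `S ∈ F` but whose interior avoids `S`. -/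
lemma gap_false {W : Type u} {F : Set (Set W)}
    (hchordal : ChordalProp F) (hhelly : FiniteHelly F)
    {T : SimpleGraph W} (hedges : ∀ u v : W, T.Adj u v → ({u, v} : Set W) ∈ F)
    {S : Set W} (hS : S ∈ F) (w : ℕ → W) (b : ℕ) (hb : 2 ≤ b)
    (hadj : ∀ i, i < b → T.Adj (w i) (w (i + 1)))
    (hinj : ∀ i, i ≤ b → ∀ j, j ≤ b → w i = w j → i = j)
    (h0 : w 0 ∈ S) (hbS : w b ∈ S)
    (hmid : ∀ i, 0 < i → i < b → w i ∉ S) : False := by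
  classical
  have memS : ∀ k, k ≤ b → (w k ∈ S ↔ (k = 0 ∨ k = b)) := by
    intro k hk
    constructor
    · intro h
      by_contra hc
      push_neg at hc
      exact hmid k (by omega) (by omega) h
    · rintro (rfl | rfl) <;> assumption
  set E : ℕ → Set W := fun k => {w k, w (k + 1)} with hEdef
  have hE : ∀ k, k < b → E k ∈ F := fun k hk => hedges _ _ (hadj k hk)
  have hSEint : ∀ c, c < b → ((S ∩ E c).Nonempty ↔ (c = 0 ∨ c + 1 = b)) := by
    intro c hc
    constructor
    · rintro ⟨z, hzS, hzE⟩
      rcases hzE with rfl | rfl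
      · have := (memS c (by omega)).mp hzS; omega
      · have := (memS (c + 1) (by omega)).mp hzS; omega
    · rintro (rfl | h)
      · exact ⟨w 0, h0, Or.inl rfl⟩
      · subst h; exact ⟨w (c + 1), hbS, Or.inr rfl⟩
  have hEint : ∀ a c, a < b → c < b →
      ((E a ∩ E c).Nonempty ↔ (a = c ∨ a + 1 = c ∨ c + 1 = a)) := by
    intro a c ha hc
    constructor
    · rintro ⟨z, hz1, hz2⟩
      rcases hz1 with rfl | rfl <;> rcases hz2 with h | h <;>
      · have := hinj _ (by omega) _ (by omega) h
        omega
    · rintro (rfl | h | h)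
      · exact ⟨w a, Or.inl rfl, Or.inl rfl⟩
      · subst h; exact ⟨w (a + 1), Or.inr rfl, Or.inl rfl⟩
      · subst h; exact ⟨w (c + 1), Or.inl rfl, Or.inr rfl⟩
  rcases Nat.lt_or_ge b 3 with hb2 | hb3
  · -- b = 2 : use the Helly property on {S, E 0, E 1}
    have hb2 : b = 2 := by omega
    subst hb2
    set R : Finset (Set W) := {S, E 0, E 1} with hR
    have hmem : ∀ A ∈ ({S, E 0, E 1} : Finset (Set W)), A = S ∨ A = E 0 ∨ A = E 1 := by
      intro A hA
      simpa using hA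
    obtain ⟨z, hz⟩ := hhelly R ⟨S, by simp [hR]⟩
      (by
        intro A hA
        rcases hmem A hA with rfl | rfl | rfl
        · exact hS
        · exact hE 0 (by omega)
        · exact hE 1 (by omega))
      (by
        intro A hA B hB hne
        rcases hmem A hA with rfl | rfl | rfl <;> rcases hmem B hB with rfl | rfl | rfl
        · exact absurd rfl hne
        · exact (hSEint 0 (by omega)).mpr (Or.inl rfl)
        · exact (hSEint 1 (by omega)).mpr (Or.inr rfl)
        · obtain ⟨z, h1, h2⟩ := (hSEint 0 (by omega)).mpr (Or.inl rfl)
          exact ⟨z, h2, h1⟩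
        · exact absurd rfl hne
        · exact (hEint 0 1 (by omega) (by omega)).mpr (Or.inr (Or.inl rfl))
        · obtain ⟨z, h1, h2⟩ := (hSEint 1 (by omega)).mpr (Or.inr rfl)
          exact ⟨z, h2, h1⟩
        · obtain ⟨z, h1, h2⟩ := (hEint 0 1 (by omega) (by omega)).mpr (Or.inr (Or.inl rfl))
          exact ⟨z, h2, h1⟩
        · exact absurd rfl hne)
    simp only [Set.mem_iInter] at hz
    have hzS : z ∈ S := hz S (by simp [hR])
    have hzE0 : z ∈ E 0 := hz (E 0) (by simp [hR])
    have hzE1 : z ∈ E 1 := hz (E 1) (by simp [hR])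
    rcases hzE0 with rfl | rfl <;> rcases hzE1 with h | h
    · exact absurd (hinj 0 (by omega) 1 (by omega) h) (by omega)
    · exact absurd (hinj 0 (by omega) 2 (by omega) h) (by omega)
    · exact hmid 1 (by omega) (by omega) hzS
    · exact absurd (hinj 1 (by omega) 2 (by omega) h) (by omega)
  · -- b ≥ 3 : construct an induced cycle of length b + 1, contradicting chordality
    apply hchordal
    haveI : NeZero (b + 1) := ⟨Nat.succ_ne_zero b⟩
    haveI : Fact (1 < b + 1) := ⟨by omega⟩
    have hSneE : ∀ c, c < b → S ≠ E c := by
      intro c hc heq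
      have hw0 : w 0 ∈ E c := heq ▸ h0
      have hwb : w b ∈ E c := heq ▸ hbS
      rcases hw0 with h | h <;> rcases hwb with h' | h' <;>
      · have e1 := hinj _ (by omega) _ (by omega) h
        have e2 := hinj _ (by omega) _ (by omega) h'
        omega
    have hEneE : ∀ a c, a < b → c < b → a ≠ c → E a ≠ E c := by
      intro a c ha hc hne heq
      have h1 : w a ∈ E c := heq ▸ (Or.inl rfl : w a ∈ E a)
      have h2 : w (a + 1) ∈ E c := heq ▸ (Or.inr rfl : w (a + 1) ∈ E a)
      rcases h1 with h1 | h1 <;> rcases h2 with h2 | h2 <;>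
      · have e1 := hinj _ (by omega) _ (by omega) h1
        have e2 := hinj _ (by omega) _ (by omega) h2
        omega
    have hval : ∀ k : ZMod (b + 1), k.val ≤ b := fun k => Nat.lt_succ_iff.mp (ZMod.val_lt k)
    set f : ZMod (b + 1) → ↥F := fun k =>
      if h : k.val = 0 then ⟨S, hS⟩
      else ⟨E (k.val - 1), hE _ (by have := hval k; omega)⟩ with hfdef
    have fset : ∀ k : ZMod (b + 1),
        (f k : Set W) = if k.val = 0 then S else E (k.val - 1) := by
      intro k
      by_cases h : k.val = 0
      · simp only [hfdef, dif_pos h, if_pos h]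
      · simp only [hfdef, dif_neg h, if_neg h]
    have finj : Function.Injective f := by
      intro i j hij
      have hsets : (f i : Set W) = (f j : Set W) := by rw [hij]
      rw [fset i, fset j] at hsets
      apply ZMod.val_injective
      by_cases h0i : i.val = 0 <;> by_cases h0j : j.val = 0
      · omega
      · rw [if_pos h0i, if_neg h0j] at hsets
        exact absurd hsets (hSneE _ (by have := hval j; omega))
      · rw [if_neg h0i, if_pos h0j] at hsets
        exact absurd hsets.symm (hSneE _ (by have := hval i; omega))
      · rw [if_neg h0i, if_neg h0j] at hsets
        by_contra hne
        exact hEneE _ _ (by have := hval i; omega) (by have := hval j; omega)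
          (by omega) hsets
    refine ⟨b + 1, by omega, f, finj, ?_⟩
    intro i j
    have hsucc : ∀ i j : ZMod (b + 1), j = i + 1 ↔ j.val = (i.val + 1) % (b + 1) := by
      intro i j
      constructor
      · rintro rfl
        rw [ZMod.val_add, ZMod.val_one]
      · intro h
        apply ZMod.val_injective
        rw [h, ZMod.val_add, ZMod.val_one]
    have ha := hval i
    have hc := hval j
    have hinter : ((f i : Set W) ∩ (f j : Set W)).Nonempty ↔
        (i.val = j.val ∨ (i.val = 0 ∧ (j.val = 1 ∨ j.val = b)) ∨
          (j.val = 0 ∧ (i.val = 1 ∨ i.val = b)) ∨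
          (i.val ≠ 0 ∧ j.val ≠ 0 ∧ (i.val + 1 = j.val ∨ j.val + 1 = i.val))) := by
      rw [fset i, fset j]
      by_cases h0i : i.val = 0 <;> by_cases h0j : j.val = 0
      · rw [if_pos h0i, if_pos h0j]
        simp only [Set.inter_self]
        constructor
        · intro _; omega
        · intro _; exact ⟨w 0, h0⟩
      · rw [if_pos h0i, if_neg h0j]
        rw [hSEint _ (by omega)]
        omega
      · rw [if_neg h0i, if_pos h0j]
        rw [Set.inter_comm, hSEint _ (by omega)]
        omega
      · rw [if_neg h0i, if_neg h0j]
        rw [hEint _ _ (by omega) (by omega)]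
        omega
    have hne_iff : f i ≠ f j ↔ i.val ≠ j.val := by
      constructor
      · intro h h'
        exact h (congrArg f (ZMod.val_injective _ h'))
      · intro h h'
        exact h (congrArg ZMod.val (finj h'))
    have hmod : ∀ a : ℕ, a ≤ b → (a + 1) % (b + 1) = if a = b then 0 else a + 1 := by
      intro a hab
      by_cases h : a = b
      · simp [h, Nat.mod_self]
      · rw [if_neg h, Nat.mod_eq_of_lt (by omega)]
    show (f i ≠ f j ∧ ((f i : Set W) ∩ (f j : Set W)).Nonempty) ↔ _
    rw [hne_iff, hinter, hsucc i j, hsucc j i, hmod _ ha, hmod _ hc]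
    by_cases h1 : i.val = b <;> by_cases h2 : j.val = b
    · rw [if_pos h1, if_pos h2]; omega
    · rw [if_pos h1, if_neg h2]; omega
    · rw [if_neg h1, if_pos h2]; omega
    · rw [if_neg h1, if_neg h2]; omega

/-- If `F` has the chordal and finite Helly properties and `T` is a tree on `W` all of
whose edges are members of `F`, then every member of `F` induces a connected subgraph. -/
theorem stmt9 {W : Type u} (F : Set (Set W))
    (hchordal : ChordalProp F) (hhelly : FiniteHelly F)
    (T : SimpleGraph W) (hT : T.IsTree)
    (hedges : ∀ u v : W, T.Adj u v → ({u, v} : Set W) ∈ F) :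
    ∀ S ∈ F, (T.induce S).Connected := by
  classical
  intro S hS
  have hSne : S.Nonempty := by
    by_contra h
    rw [Set.not_nonempty_iff_eq_empty] at h
    obtain ⟨z, hz⟩ := hhelly {S} ⟨S, by simp⟩ (by simp [hS])
      (by intro A hA B hB hne; simp only [Finset.mem_singleton] at hA hB
          subst hA; subst hB; exact absurd rfl hne)
    simp only [Set.mem_iInter, Finset.mem_singleton] at hz
    have := hz S rfl
    rw [h] at this
    exact this
  haveI : Nonempty ↥S := hSne.to_subtype
  refine ⟨fun a c => ?_⟩
  obtain ⟨x, hx⟩ := a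
  obtain ⟨y, hy⟩ := c
  obtain ⟨q⟩ := hT.isConnected.preconnected x y
  obtain ⟨p, hp⟩ := q.toPath
  -- All vertices of the path lie in S.
  have hall : ∀ i, i ≤ p.length → p.getVert i ∈ S := by
    by_contra hcon
    push_neg at hcon
    obtain ⟨i, hi, hiS⟩ := hcon
    have hx0 : p.getVert 0 ∈ S := by rw [p.getVert_zero]; exact hx
    have hyL : p.getVert p.length ∈ S := by rw [p.getVert_length]; exact hy
    set P : ℕ → Prop := fun k => p.getVert k ∈ S with hPdef
    set a := Nat.findGreatest P i with hadef
    have haP : P a := Nat.findGreatest_spec (Nat.zero_le i) hx0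
    have hai : a ≤ i := Nat.findGreatest_le i
    have hane : a ≠ i := fun h => hiS (h ▸ haP)
    have hagr : ∀ k, a < k → k ≤ i → ¬ P k := fun k h1 h2 =>
      Nat.findGreatest_is_greatest h1 h2
    have hex : ∃ k, i ≤ k ∧ k ≤ p.length ∧ P k := ⟨p.length, hi, le_refl _, hyL⟩
    obtain ⟨hid, hdL, hdP⟩ := Nat.find_spec hex
    set d := Nat.find hex with hddef
    have hdmin : ∀ k, k < d → ¬ (i ≤ k ∧ k ≤ p.length ∧ P k) := fun k hk =>
      Nat.find_min hex hk
    have hidlt : i < d := by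
      rcases Nat.lt_or_ge i d with h | h
      · exact h
      · exfalso
        apply hiS
        have he : i = d := by omega
        rw [he, hddef]
        exact hdP
    have hgap : 2 ≤ d - a := by omega
    apply gap_false hchordal hhelly hedges hS (fun t => p.getVert (a + t)) (d - a) hgap
    · intro t ht
      have : a + t + 1 = a + (t + 1) := by ring
      rw [← this]
      exact p.adj_getVert_succ (by omega)
    · intro t1 ht1 t2 ht2 heq
      have := path_getVert_inj hp (a + t1) (by omega) (a + t2) (by omega) heq
      omega
    · simpa using haP
    · have : a + (d - a) = d := by omega
      rw [this]; exact hdP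
    · intro t ht1 ht2
      intro hmem
      have hk : a < a + t := by omega
      rcases Nat.lt_or_ge (a + t) i with h | h
      · exact hagr (a + t) hk (by omega) hmem
      · exact hdmin (a + t) (by omega) ⟨h, by omega, hmem⟩
  have hsupp : ∀ z, z ∈ p.support → z ∈ S := by
    intro z hz
    rw [SimpleGraph.Walk.mem_support_iff_exists_getVert] at hz
    obtain ⟨n, hn, hnl⟩ := hz
    exact hn ▸ hall n hnl
  exact reach_induce hy x p hsupp hx
end

section
/- Let G be a chordal graph such that no countable clique of G can be enumerated as {v_i : i ≥ 1} in such a way that for each i ≥ 1 there is a vertex of G adjacent to all of v₁, ..., v_{i-1} but not to v_i. Then G is the intersection graph of a set of subtrees of a tree. -/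
open Set

universe u

namespace Halin

variable {V : Type u} {G : SimpleGraph V}

lemma val_add_one {n : ℕ} (hn : 4 ≤ n) (i : ZMod n) :
    haveI : NeZero n := ⟨by omega⟩
    (i + 1).val = if i.val = n - 1 then 0 else i.val + 1 := by
  haveI : NeZero n := ⟨by omega⟩
  haveI : Fact (1 < n) := ⟨by omega⟩
  have hlt : i.val < n := ZMod.val_lt i
  rw [ZMod.val_add, ZMod.val_one]
  by_cases h : i.val = n - 1
  · simp [h]
    have : n - 1 + 1 = n := by omega
    rw [this, Nat.mod_self]
  · simp [h]
    exact Nat.mod_eq_of_lt (by omega)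

lemma chordal_no_cycle (hch : Chordal G) {n : ℕ} (hn : 4 ≤ n) (g : ℕ → V)
    (hinj : ∀ a b, a < n → b < n → g a = g b → a = b)
    (hadj : ∀ a b, a < n → b < n →
      (G.Adj (g a) (g b) ↔
        (b = a + 1 ∨ a = b + 1 ∨ (a = 0 ∧ b = n - 1) ∨ (b = 0 ∧ a = n - 1)))) : False := by
  haveI : NeZero n := ⟨by omega⟩
  apply hch
  refine ⟨n, hn, fun i => g i.val, ?_, ?_⟩
  · intro i j hij
    exact ZMod.val_injective n (hinj _ _ (ZMod.val_lt i) (ZMod.val_lt j) hij)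
  · intro i j
    have key : ∀ a b : ZMod n, b = a + 1 ↔ (b.val = a.val + 1 ∨ (a.val = n - 1 ∧ b.val = 0)) := by
      intro a b
      constructor
      · intro h
        subst h
        rw [val_add_one hn a]
        by_cases h : a.val = n - 1 <;> simp [h]
      · intro h
        apply ZMod.val_injective n
        rw [val_add_one hn a]
        rcases h with h | ⟨h1, h2⟩
        · have : a.val ≠ n - 1 := by
            have := ZMod.val_lt b; omega
          simp [this, h]
        · simp [h1, h2]
    rw [hadj i.val j.val (ZMod.val_lt i) (ZMod.val_lt j), key i j, key j i]
    have hi := ZMod.val_lt i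
    have hj := ZMod.val_lt j
    constructor
    · rintro (h | h | ⟨h1, h2⟩ | ⟨h1, h2⟩)
      · left; left; exact h
      · right; left; exact h
      · right; right; exact ⟨h2, h1⟩
      · left; right; exact ⟨h2, h1⟩
    · rintro ((h | ⟨h1, h2⟩) | (h | ⟨h1, h2⟩))
      · left; exact h
      · right; right; right; exact ⟨h2, h1⟩
      · right; left; exact h
      · right; right; left; exact ⟨h2, h1⟩

def ChainIn (G : SimpleGraph V) (C : Set V) (a b : V) : Prop :=
  Relation.ReflTransGen (fun p q => G.Adj p q ∧ p ∈ C ∧ q ∈ C) a b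

lemma ChainIn.mono {C C' : Set V} (hCC : C ⊆ C') {a b : V} (h : ChainIn G C a b) :
    ChainIn G C' a b := by
  induction h with
  | refl => exact Relation.ReflTransGen.refl
  | tail h1 h2 ih => exact ih.tail ⟨h2.1, hCC h2.2.1, hCC h2.2.2⟩

lemma ChainIn.symm {C : Set V} {a b : V} (h : ChainIn G C a b) : ChainIn G C b a := by
  induction h with
  | refl => exact Relation.ReflTransGen.refl
  | tail h1 h2 ih =>
    exact Relation.ReflTransGen.trans
      (Relation.ReflTransGen.single ⟨h2.1.symm, h2.2.2, h2.2.1⟩) ih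

lemma ChainIn.trans {C : Set V} {a b c : V} (h1 : ChainIn G C a b) (h2 : ChainIn G C b c) :
    ChainIn G C a c := Relation.ReflTransGen.trans h1 h2

/-- all elements along the chain from `a` are in the closure -/
lemma ChainIn.mem_of_closed {C : Set V} {a b : V}
    (h : ChainIn G C a b) {D : Set V} (hD : ∀ x ∈ D, ∀ y, G.Adj x y → y ∈ C → y ∈ D)
    (ha : a ∈ D) : b ∈ D := by
  induction h with
  | refl => exact ha
  | tail h1 h2 ih => exact hD _ ih _ h2.1 h2.2.2

lemma chain_exists_fun {C : Set V} {a b : V} (h : ChainIn G C a b) (ha : a ∈ C) :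
    ∃ (m : ℕ) (f : ℕ → V), f 0 = a ∧ f m = b ∧ (∀ k, k ≤ m → f k ∈ C) ∧
      ∀ k, k < m → G.Adj (f k) (f (k + 1)) := by
  induction h with
  | refl => exact ⟨0, fun _ => a, rfl, rfl, fun k _ => ha, fun k hk => by omega⟩
  | @tail b' c h1 h2 ih =>
    obtain ⟨m, f, hf0, hfm, hfC, hfadj⟩ := ih
    refine ⟨m + 1, fun k => if k ≤ m then f k else c, by simp [hf0], by simp, ?_, ?_⟩
    · intro k hk
      by_cases hkm : k ≤ m
      · simpa [hkm] using hfC k hkm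
      · simpa [hkm] using h2.2.2
    · intro k hk
      by_cases hkm : k < m
      · simp only [show k ≤ m by omega, if_pos, show k + 1 ≤ m by omega]
        simpa [show k ≤ m by omega, show k + 1 ≤ m by omega] using hfadj k hkm
      · have hk' : k = m := by omega
        subst hk'
        simpa [show ¬ (k+1 ≤ k) by omega, hfm] using h2.1

/-- The finite domination lemma in chordal graphs. -/
lemma dom_finite (hch : Chordal G) (C : Set V)
    (hCconn : ∀ a b, a ∈ C → b ∈ C → ChainIn G C a b) (hCne : C.Nonempty)
    (F : Finset V) (hFC : ∀ a ∈ F, a ∉ C)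
    (hFcl : ∀ a ∈ F, ∀ b ∈ F, a ≠ b → G.Adj a b)
    (hFN : ∀ a ∈ F, ∃ c ∈ C, G.Adj a c) :
    ∃ v ∈ C, ∀ a ∈ F, G.Adj v a := by
  classical
  induction F using Finset.induction_on with
  | empty => exact ⟨hCne.choose, hCne.choose_spec, by simp⟩
  | @insert y F hyF ih =>
    obtain ⟨v', hv'C, hv'dom⟩ := ih (fun a ha => hFC a (by simp [ha]))
      (fun a ha b hb hab => hFcl a (by simp [ha]) b (by simp [hb]) hab)
      (fun a ha => hFN a (by simp [ha]))
    obtain ⟨u, huC, hyu⟩ := hFN y (by simp)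
    -- minimal length chain from a neighbor of y to v'
    have hP : ∃ m : ℕ, ∃ f : ℕ → V, (∀ k, k ≤ m → f k ∈ C) ∧
        (∀ k, k < m → G.Adj (f k) (f (k + 1))) ∧ G.Adj y (f 0) ∧ f m = v' := by
      obtain ⟨m, f, hf0, hfm, hfC', hfadj⟩ := chain_exists_fun (hCconn u v' huC hv'C) huC
      exact ⟨m, f, hfC', hfadj, hf0 ▸ hyu, hfm⟩
    set P : ℕ → Prop := fun m => ∃ f : ℕ → V, (∀ k, k ≤ m → f k ∈ C) ∧
        (∀ k, k < m → G.Adj (f k) (f (k + 1))) ∧ G.Adj y (f 0) ∧ f m = v' with hPdef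
    have hPex : ∃ m, P m := hP
    set m₀ := Nat.find hPex with hm₀
    obtain ⟨f, hfC', hfadj, hyf0, hfm⟩ := Nat.find_spec hPex
    -- F1 : y has no neighbor beyond f 0 on the chain
    have F1 : ∀ k, 1 ≤ k → k ≤ m₀ → ¬ G.Adj y (f k) := by
      intro k hk1 hkm hadj
      have : P (m₀ - k) := by
        refine ⟨fun t => f (t + k), fun t ht => hfC' _ (by omega), fun t ht => ?_, by simpa using hadj, ?_⟩
        · have := hfadj (t + k) (by omega)
          simpa [Nat.add_right_comm] using this
        · simp only []
          rw [show m₀ - k + k = m₀ by omega, hfm]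
      exact Nat.find_min hPex (by omega) this

    -- splice lemma
    have hsplice : ∀ d a : ℕ, 1 ≤ d → a + d + 1 ≤ m₀ → G.Adj (f a) (f (a + d + 1)) → False := by
      intro d a hd ham hadj
      have : P (m₀ - d) := by
        refine ⟨fun t => if t ≤ a then f t else f (t + d), ?_, ?_, ?_, ?_⟩
        · intro t ht
          by_cases hta : t ≤ a
          · simpa [hta] using hfC' t (by omega)
          · simpa [hta] using hfC' (t + d) (by omega)
        · intro t ht
          rcases lt_trichotomy t a with h | h | h
          · simpa [show t ≤ a by omega, show t + 1 ≤ a by omega] using hfadj t (by omega)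
          · subst h
            have hadj' := hadj
            rw [show t + d + 1 = t + 1 + d by omega] at hadj'
            simpa [le_refl, show ¬ (t + 1 ≤ t) by omega] using hadj'
          · have h1 : ¬ (t ≤ a) := by omega
            have h2 : ¬ (t + 1 ≤ a) := by omega
            have := hfadj (t + d) (by omega)
            rw [show t + d + 1 = t + 1 + d by omega] at this
            simpa [h1, h2] using this
        · simpa using hyf0
        · have h1 : ¬ (m₀ - d ≤ a) := by omega
          simp only [h1, if_false]
          rw [show m₀ - d + d = m₀ by omega, hfm]
      exact Nat.find_min hPex (by omega) this
    have F2 : ∀ a b, a < b → b ≤ m₀ → f a ≠ f b := by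
      intro a b hab hbm heq
      rcases eq_or_lt_of_le hbm with hbm' | hbm'
      · subst hbm'
        have : P a := ⟨f, fun k hk => hfC' k (by omega), fun k hk => hfadj k (by omega),
          hyf0, heq.symm ▸ hfm⟩
        exact Nat.find_min hPex (by omega) this
      · refine hsplice (b - a) a (by omega) (by omega) ?_
        rw [show a + (b - a) + 1 = b + 1 by omega, heq]
        exact hfadj b (by omega)
    have F3 : ∀ a b, a + 2 ≤ b → b ≤ m₀ → ¬ G.Adj (f a) (f b) := by
      intro a b hab hbm hadj
      refine hsplice (b - a - 1) a (by omega) (by omega) ?_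
      rwa [show a + (b - a - 1) + 1 = b by omega]
    -- now handle each element of F
    have key : ∀ k' ∈ F, G.Adj k' (f 0) := by
      intro k' hk'
      have hex : ∃ i, G.Adj k' (f i) := ⟨m₀, hfm.symm ▸ (hv'dom k' hk').symm⟩
      set i₀ := Nat.find hex with hi₀
      have hspec : G.Adj k' (f i₀) := Nat.find_spec hex
      have hi₀m : i₀ ≤ m₀ := Nat.find_min' hex (hfm.symm ▸ (hv'dom k' hk').symm)
      rcases Nat.eq_zero_or_pos i₀ with h0 | h0
      · exact h0 ▸ hspec
      exfalso
      have hyC : y ∉ C := hFC y (by simp)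
      have hkC : k' ∉ C := hFC k' (by simp [hk'])
      have hyk : y ≠ k' := fun h => hyF (h ▸ hk')
      have hykadj : G.Adj y k' := hFcl y (by simp) k' (by simp [hk']) hyk
      set n := i₀ + 3 with hn
      set gc : ℕ → V := fun a => if a ≤ i₀ then f a else if a = i₀ + 1 then k' else y with hgc
      have gcf : ∀ a, a ≤ i₀ → gc a = f a := fun a ha => by simp [hgc, ha]
      have gck : gc (i₀ + 1) = k' := by simp [hgc]
      have gcy : gc (i₀ + 2) = y := by simp [hgc, show ¬ (i₀+2 ≤ i₀) by omega, show i₀+2 ≠ i₀+1 by omega]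
      have fCmem : ∀ a, a ≤ i₀ → f a ∈ C := fun a ha => hfC' a (by omega)
      -- injectivity
      have hinj : ∀ a b, a < n → b < n → gc a = gc b → a = b := by
        intro a b han hbn heq
        by_contra hne
        -- wlog a < b
        wlog hab : a < b generalizing a b
        · exact this b a hbn han heq.symm (Ne.symm hne) (by omega)
        have hb2 : b ≤ i₀ + 2 := by omega
        by_cases hbi : b ≤ i₀
        · exact F2 a b hab (by omega) (by rwa [gcf a (by omega), gcf b hbi] at heq)
        by_cases hbk : b = i₀ + 1
        · subst hbk
          by_cases hai : a ≤ i₀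
          · rw [gcf a hai, gck] at heq; exact hkC (heq ▸ fCmem a hai)
          · omega
        · have hby : b = i₀ + 2 := by omega
          subst hby
          rw [gcy] at heq
          by_cases hai : a ≤ i₀
          · rw [gcf a hai] at heq; exact hyC (heq ▸ fCmem a hai)
          · have ha1 : a = i₀ + 1 := by omega
            rw [ha1, gck] at heq; exact hyk heq.symm
      -- adjacency characterization for a < b
      have main : ∀ a b, a < b → b < n → (G.Adj (gc a) (gc b) ↔ (b = a + 1 ∨ (a = 0 ∧ b = n - 1))) := by
        intro a b hab hbn
        by_cases hbi : b ≤ i₀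
        · rw [gcf a (by omega), gcf b hbi]
          constructor
          · intro hadj
            by_contra hcon
            push_neg at hcon
            have : a + 2 ≤ b := by
              rcases Nat.lt_or_ge (a+1) b with h | h
              · omega
              · omega
            exact F3 a b (by omega) (by omega) hadj
          · rintro (h | ⟨h1, h2⟩)
            · exact h ▸ hfadj a (by omega)
            · omega
        by_cases hbk : b = i₀ + 1
        · subst hbk
          have hai : a ≤ i₀ := by omega
          rw [gcf a hai, gck]
          constructor
          · intro hadj
            left
            have : ¬ a < i₀ := fun h => Nat.find_min hex h hadj.symm
            omega
          · rintro (h | ⟨h1, h2⟩)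
            · have : a = i₀ := by omega
              subst this; exact hspec.symm
            · omega
        · have hby : b = i₀ + 2 := by omega
          subst hby
          rw [gcy]
          by_cases hak : a = i₀ + 1
          · subst hak
            rw [gck]
            simp only [show i₀ + 2 = i₀ + 1 + 1 from rfl, true_or, iff_true]
            exact hykadj.symm
          · have hai : a ≤ i₀ := by omega
            rw [gcf a hai]
            constructor
            · intro hadj
              right
              rcases Nat.eq_zero_or_pos a with h | h
              · exact ⟨h, by omega⟩
              · exact absurd hadj.symm (F1 a (by omega) (by omega))
            · rintro (h | ⟨h1, h2⟩)
              · omega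
              · subst h1
                exact hyf0.symm
      -- full adjacency
      have hadjfull : ∀ a b, a < n → b < n →
          (G.Adj (gc a) (gc b) ↔
            (b = a + 1 ∨ a = b + 1 ∨ (a = 0 ∧ b = n - 1) ∨ (b = 0 ∧ a = n - 1))) := by
        intro a b han hbn
        rcases lt_trichotomy a b with h | h | h
        · rw [main a b h hbn]
          constructor
          · rintro (h' | ⟨h1, h2⟩)
            · left; exact h'
            · right; right; left; exact ⟨h1, h2⟩
          · rintro (h' | h' | ⟨h1, h2⟩ | ⟨h1, h2⟩)
            · left; exact h'
            · omega
            · right; exact ⟨h1, h2⟩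
            · omega
        · subst h
          constructor
          · intro hadj; exact absurd hadj (SimpleGraph.irrefl G)
          · rintro (h' | h' | ⟨h1, h2⟩ | ⟨h1, h2⟩) <;> omega
        · rw [G.adj_comm, main b a h han]
          constructor
          · rintro (h' | ⟨h1, h2⟩)
            · right; left; exact h'
            · right; right; right; exact ⟨h1, h2⟩
          · rintro (h' | h' | ⟨h1, h2⟩ | ⟨h1, h2⟩)
            · omega
            · left; exact h'
            · omega
            · right; exact ⟨h1, h2⟩
      exact chordal_no_cycle hch (show 4 ≤ n by omega) gc hinj hadjfull
    refine ⟨f 0, hfC' 0 (by omega), ?_⟩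
    intro a ha
    rcases Finset.mem_insert.mp ha with h | h
    · exact h ▸ hyf0.symm
    · exact (key a h).symm

lemma dom_infinite (hch : Chordal G)
    (h : ¬ ∃ v : ℕ → V, Function.Injective v ∧
        (∀ i j : ℕ, i ≠ j → G.Adj (v i) (v j)) ∧
        ∀ i : ℕ, ∃ w : V, w ≠ v i ∧ (∀ j : ℕ, j < i → G.Adj w (v j)) ∧ ¬ G.Adj w (v i))
    (C K : Set V)
    (hCconn : ∀ a b, a ∈ C → b ∈ C → ChainIn G C a b) (hCne : C.Nonempty)
    (hdisj : ∀ a ∈ K, a ∉ C)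
    (hKcl : ∀ a ∈ K, ∀ b ∈ K, a ≠ b → G.Adj a b)
    (hKN : ∀ a ∈ K, ∃ c ∈ C, G.Adj a c) :
    ∃ v ∈ C, ∀ a ∈ K, G.Adj v a := by
  classical
  by_contra hcon
  push_neg at hcon
  -- step existence
  have stepex : ∀ (p : ℕ → V) (i : ℕ), ∃ wk : V × V,
      ((∀ j, j < i → p j ∈ K) →
        (wk.1 ∈ C ∧ (∀ j, j < i → G.Adj wk.1 (p j)) ∧ wk.2 ∈ K ∧ ¬ G.Adj wk.1 wk.2)) := by
    intro p i
    by_cases hp : ∀ j, j < i → p j ∈ K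
    · set F : Finset V := (Finset.range i).image p with hF
      have hmem : ∀ a ∈ F, a ∈ K := by
        intro a ha
        obtain ⟨j, hj, rfl⟩ := Finset.mem_image.mp ha
        exact hp j (Finset.mem_range.mp hj)
      obtain ⟨w, hwC, hwdom⟩ := dom_finite hch C hCconn hCne F
        (fun a ha => hdisj a (hmem a ha))
        (fun a ha b hb hab => hKcl a (hmem a ha) b (hmem b hb) hab)
        (fun a ha => hKN a (hmem a ha))
      obtain ⟨k0, hk0K, hk0adj⟩ := hcon w hwC
      refine ⟨(w, k0), fun _ => ⟨hwC, fun j hj => ?_, hk0K, hk0adj⟩⟩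
      exact hwdom (p j) (Finset.mem_image.mpr ⟨j, Finset.mem_range.mpr hj, rfl⟩)
    · exact ⟨(hCne.choose, hCne.choose), fun hp' => absurd hp' hp⟩
  choose step hstep using stepex
  -- build the sequence
  set prefixf : ℕ → (ℕ → V) := fun i => Nat.rec (fun _ => hCne.choose)
    (fun i g => fun j => if j = i then (step g i).2 else g j) i with hprefixf
  set k : ℕ → V := fun i => (step (prefixf i) i).2 with hk
  set w : ℕ → V := fun i => (step (prefixf i) i).1 with hw
  have hpre : ∀ i j, j < i → prefixf i j = k j := by
    intro i
    induction i with
    | zero => intro j hj; omega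
    | succ i ih =>
      intro j hj
      by_cases hji : j = i
      · subst hji
        simp [hprefixf, hk]
      · have : j < i := by omega
        simp only [hprefixf]
        simp only [hji, if_false]
        exact ih j this
  have main : ∀ i, k i ∈ K ∧ w i ∈ C ∧ (∀ j, j < i → G.Adj (w i) (k j)) ∧ ¬ G.Adj (w i) (k i) := by
    intro i
    induction i using Nat.strong_induction_on with
    | _ i ih =>
      have hyp : ∀ j, j < i → prefixf i j ∈ K := by
        intro j hj
        rw [hpre i j hj]
        exact (ih j hj).1
      obtain ⟨h1, h2, h3, h4⟩ := hstep (prefixf i) i hyp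
      exact ⟨h3, h1, fun j hj => (hpre i j hj) ▸ h2 j hj, h4⟩
  -- assemble contradiction
  apply h
  have hinj' : ∀ i j, j < i → k i ≠ k j := by
    intro i j hlt heq
    have h1 := (main i).2.2.1 j hlt
    rw [← heq] at h1
    exact (main i).2.2.2 h1
  refine ⟨k, ?_, ?_, ?_⟩
  · intro i j hij
    by_contra hne
    rcases Nat.lt_or_ge j i with hlt | hge
    · exact hinj' i j hlt hij
    · exact hinj' j i (by omega) hij.symm
  · intro i j hij
    have hne : k i ≠ k j := by
      rcases Nat.lt_or_ge j i with hlt | hge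
      · exact hinj' i j hlt
      · exact fun heq => hinj' j i (by omega) heq.symm
    exact hKcl _ (main i).1 _ (main j).1 hne
  · intro i
    refine ⟨w i, ?_, (main i).2.2.1, (main i).2.2.2⟩
    intro heq
    exact hdisj (k i) (main i).1 (heq ▸ (main i).2.1)

/-- "good" partial well-orders -/
structure Good (G : SimpleGraph V) (R : Set (V × V)) : Prop where
  gdom : ∀ p ∈ R, ((p.1, p.1) ∈ R ∧ (p.2, p.2) ∈ R)
  gtrans : ∀ x y z, (x, y) ∈ R → (y, z) ∈ R → (x, z) ∈ R
  gantisym : ∀ x y, (x, y) ∈ R → (y, x) ∈ R → x = y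
  gtotal : ∀ x y, (x, x) ∈ R → (y, y) ∈ R → (x, y) ∈ R ∨ (y, x) ∈ R
  gmin : ∀ S : Set V, (∀ x ∈ S, (x, x) ∈ R) → S.Nonempty →
    ∃ m ∈ S, ∀ x ∈ S, (x, m) ∈ R → x = m
  gBC : ∀ x u u', (u, x) ∈ R → (u', x) ∈ R → u ≠ x → u' ≠ x →
    G.Adj x u → G.Adj x u' → u ≠ u' → G.Adj u u'
  gcomp : ∀ a a' c c', (a, a) ∈ R → (a', a') ∈ R → (c, c) ∉ R → (c', c') ∉ R →
    ChainIn G {v | (v, v) ∉ R} c c' → G.Adj a c → G.Adj a' c' → a ≠ a' → G.Adj a a'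

theorem phase1 (hch : Chordal G)
    (h : ¬ ∃ v : ℕ → V, Function.Injective v ∧
        (∀ i j : ℕ, i ≠ j → G.Adj (v i) (v j)) ∧
        ∀ i : ℕ, ∃ w : V, w ≠ v i ∧ (∀ j : ℕ, j < i → G.Adj w (v j)) ∧ ¬ G.Adj w (v i)) :
    ∃ lt : V → V → Prop,
      (∀ x, ¬ lt x x) ∧
      (∀ x y z, lt x y → lt y z → lt x z) ∧
      (∀ x y, lt x y ∨ x = y ∨ lt y x) ∧
      WellFounded lt ∧
      (∀ x u u', lt u x → lt u' x → G.Adj x u → G.Adj x u' → u ≠ u' → G.Adj u u') := by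
  classical
  -- the poset of good partial orders
  let P := {R : Set (V × V) // Good G R}
  let ExtR : P → P → Prop := fun a b => a.val ⊆ b.val ∧
    ∀ x y : V, (x, y) ∈ b.val → (y, y) ∈ a.val → (x, y) ∈ a.val
  have ExtRTrans : ∀ {a b c : P}, ExtR a b → ExtR b c → ExtR a c := by
    rintro R1 R2 R3 ⟨h12, i12⟩ ⟨h23, i23⟩
    refine ⟨h12.trans h23, fun x y hxy hy => ?_⟩
    exact i12 x y (i23 x y hxy (h12 hy)) hy
  have goodEmpty : Good G (∅ : Set (V × V)) := by
    constructor
    · intro p hp; simp at hp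
    · intro x y z hxy; simp at hxy
    · intro x y hxy; simp at hxy
    · intro x y hx; simp at hx
    · intro S hS hSne
      obtain ⟨x, hx⟩ := hSne
      have := hS x hx; simp at this
    · intro x u u' hu; simp at hu
    · intro a a' c c' ha; simp at ha
  have hub : ∀ c : Set P, IsChain ExtR c → ∃ ub, ∀ a ∈ c, ExtR a ub := by
    intro c hc
    set Rc : Set (V × V) := {p | ∃ r ∈ c, p ∈ r.val} with hRc
    have pair2 : ∀ p q : V × V, p ∈ Rc → q ∈ Rc → ∃ r ∈ c, p ∈ r.val ∧ q ∈ r.val := by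
      rintro p q ⟨r1, hr1, hp⟩ ⟨r2, hr2, hq⟩
      rcases eq_or_ne r1 r2 with rfl | hne
      · exact ⟨r1, hr1, hp, hq⟩
      rcases hc hr1 hr2 hne with h12 | h21
      · exact ⟨r2, hr2, h12.1 hp, hq⟩
      · exact ⟨r1, hr1, hp, h21.1 hq⟩
    have goodRc : Good G Rc := by
      constructor
      · rintro p ⟨r, hr, hp⟩
        exact ⟨⟨r, hr, (r.2.gdom p hp).1⟩, ⟨r, hr, (r.2.gdom p hp).2⟩⟩
      · intro x y z hxy hyz
        obtain ⟨r, hr, h1, h2⟩ := pair2 _ _ hxy hyz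
        exact ⟨r, hr, r.2.gtrans x y z h1 h2⟩
      · intro x y hxy hyx
        obtain ⟨r, hr, h1, h2⟩ := pair2 _ _ hxy hyx
        exact r.2.gantisym x y h1 h2
      · intro x y hx hy
        obtain ⟨r, hr, h1, h2⟩ := pair2 _ _ hx hy
        rcases r.2.gtotal x y h1 h2 with hxy | hyx
        · exact Or.inl ⟨r, hr, hxy⟩
        · exact Or.inr ⟨r, hr, hyx⟩
      · intro S hS hSne
        obtain ⟨x₀, hx₀⟩ := hSne
        obtain ⟨r₀, hr₀, hx₀r⟩ := hS x₀ hx₀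
        obtain ⟨m, hmS₀, hmmin⟩ := r₀.2.gmin {x ∈ S | (x, x) ∈ r₀.val}
          (fun x hx => hx.2) ⟨x₀, hx₀, hx₀r⟩
        refine ⟨m, hmS₀.1, ?_⟩
        intro x hx hxm
        obtain ⟨r1, hr1, hxm1⟩ := hxm
        have hxm0 : (x, m) ∈ r₀.val := by
          rcases eq_or_ne r1 r₀ with rfl | hner
          · exact hxm1
          rcases hc hr1 hr₀ hner with h10 | h01
          · exact h10.1 hxm1
          · exact h01.2 x m hxm1 hmS₀.2
        exact hmmin x ⟨hx, (r₀.2.gdom _ hxm0).1⟩ hxm0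
      · intro x u u' hux hu'x hne1 hne2 hadj1 hadj2 hne
        obtain ⟨r, hr, h1, h2⟩ := pair2 _ _ hux hu'x
        exact r.2.gBC x u u' h1 h2 hne1 hne2 hadj1 hadj2 hne
      · intro a a' cx cy ha ha' hc1 hc2 hchain hadj1 hadj2 hne
        obtain ⟨r, hr, h1, h2⟩ := pair2 _ _ ha ha'
        refine r.2.gcomp a a' cx cy h1 h2 (fun hmem => hc1 ⟨r, hr, hmem⟩)
          (fun hmem => hc2 ⟨r, hr, hmem⟩) ?_ hadj1 hadj2 hne
        exact hchain.mono (by intro w hw hmem; exact hw ⟨r, hr, hmem⟩)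
    refine ⟨⟨Rc, goodRc⟩, ?_⟩
    intro r hr
    refine ⟨fun p hp => ⟨r, hr, hp⟩, ?_⟩
    intro x y hxy hy
    obtain ⟨r1, hr1, hxy1⟩ := hxy
    rcases eq_or_ne r1 r with rfl | hner
    · exact hxy1
    rcases hc hr1 hr hner with h1r | hr1'
    · exact h1r.1 hxy1
    · exact hr1'.2 x y hxy1 hy
  obtain ⟨M, hMmax⟩ := exists_maximal_of_chains_bounded hub (fun {a b c} => ExtRTrans)
  have hdom : ∀ z : V, (z, z) ∈ M.val := by
    by_contra hcon
    push_neg at hcon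
    obtain ⟨z, hz⟩ := hcon
    set comp := {w : V | (w, w) ∉ M.val} with hcompdef
    set C := {w | w ∈ comp ∧ ChainIn G comp z w} with hCdef
    have hzC : z ∈ C := ⟨hz, Relation.ReflTransGen.refl⟩
    have hCcl : ∀ w ∈ C, ∀ w', G.Adj w w' → w' ∈ comp → w' ∈ C := by
      intro w hw w' hadj hw'
      exact ⟨hw', hw.2.tail ⟨hadj, hw.1, hw'⟩⟩
    have upg : ∀ w, ChainIn G comp z w → ChainIn G C z w := by
      intro w hw
      induction hw with
      | refl => exact Relation.ReflTransGen.refl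
      | @tail b cc h1 h2 ih =>
        exact ih.tail ⟨h2.1, ⟨h2.2.1, h1⟩, ⟨h2.2.2, h1.tail h2⟩⟩
    have hCchain : ∀ a b, a ∈ C → b ∈ C → ChainIn G C a b := by
      intro a b ha hb
      exact (upg a ha.2).symm.trans (upg b hb.2)
    set K := {a | (a, a) ∈ M.val ∧ ∃ cc ∈ C, G.Adj a cc} with hKdef
    have hdisjCK : ∀ a ∈ K, a ∉ C := fun a ha hC => hC.1 ha.1
    have chainCC : ∀ cx cy, cx ∈ C → cy ∈ C → ChainIn G comp cx cy := by
      intro cx cy hx hy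
      exact hx.2.symm.trans hy.2
    have hKcl : ∀ a ∈ K, ∀ b ∈ K, a ≠ b → G.Adj a b := by
      intro a ha b hb hne
      obtain ⟨cx, hcx, hacx⟩ := ha.2
      obtain ⟨cy, hcy, hbcy⟩ := hb.2
      exact M.2.gcomp a b cx cy ha.1 hb.1 hcx.1 hcy.1 (chainCC cx cy hcx hcy) hacx hbcy hne
    have hKN : ∀ a ∈ K, ∃ cc ∈ C, G.Adj a cc := fun a ha => ha.2
    obtain ⟨v, hvC, hvdom⟩ := dom_infinite hch h C K hCchain ⟨z, hzC⟩ hdisjCK hKcl hKN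
    have hvnd : (v, v) ∉ M.val := hvC.1
    set R' : Set (V × V) := {p | p ∈ M.val ∨ (p.2 = v ∧ (p.1 = v ∨ (p.1, p.1) ∈ M.val))} with hR'def
    have hvvR' : (v, v) ∈ R' := Or.inr ⟨rfl, Or.inl rfl⟩
    have memR' : ∀ x y : V, ((x, y) ∈ R') ↔ ((x, y) ∈ M.val ∨ (y = v ∧ (x = v ∨ (x, x) ∈ M.val))) :=
      fun x y => Iff.rfl
    have hdiag : ∀ x, (x, x) ∈ R' → x = v ∨ (x, x) ∈ M.val := by
      intro x hx
      rcases (memR' x x).mp hx with hx | ⟨hy, _⟩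
      · exact Or.inr hx
      · exact Or.inl hy
    have hdiag' : ∀ x, (x = v ∨ (x, x) ∈ M.val) → (x, x) ∈ R' := by
      intro x hx
      rcases hx with hy | hx
      · exact (memR' x x).mpr (Or.inr ⟨hy, Or.inl hy⟩)
      · exact Or.inl hx
    have goodR' : Good G R' := by
      constructor
      · intro p hp
        rcases hp with hp | ⟨h2, h1⟩
        · exact ⟨Or.inl (M.2.gdom _ hp).1, Or.inl (M.2.gdom _ hp).2⟩
        · exact ⟨hdiag' _ h1, hdiag' _ (Or.inl h2)⟩
      · intro x y zz hxy hyz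
        rcases (memR' x y).mp hxy with hxy | ⟨hy, hx⟩
        · rcases (memR' y zz).mp hyz with hyz | ⟨hz2, _⟩
          · exact Or.inl (M.2.gtrans _ _ _ hxy hyz)
          · exact (memR' x zz).mpr (Or.inr ⟨hz2, Or.inr (M.2.gdom _ hxy).1⟩)
        · rcases (memR' y zz).mp hyz with hyz | ⟨hz2, _⟩
          · exact absurd (hy ▸ (M.2.gdom _ hyz).1) hvnd
          · exact (memR' x zz).mpr (Or.inr ⟨hz2, hx⟩)
      · intro x y hxy hyx
        rcases (memR' x y).mp hxy with hxy | ⟨hy, _⟩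
        · rcases (memR' y x).mp hyx with hyx | ⟨hx2, _⟩
          · exact M.2.gantisym _ _ hxy hyx
          · exact absurd (hx2 ▸ (M.2.gdom _ hxy).1) hvnd
        · rcases (memR' y x).mp hyx with hyx | ⟨hx2, _⟩
          · exact absurd (hy ▸ (M.2.gdom _ hyx).1) hvnd
          · exact hx2.trans hy.symm
      · intro x y hx hy
        rcases hdiag x hx with hxv | hxM
        · exact Or.inr ((memR' y x).mpr (Or.inr ⟨hxv, hdiag y hy⟩))
        · rcases hdiag y hy with hyv | hyM
          · exact Or.inl ((memR' x y).mpr (Or.inr ⟨hyv, Or.inr hxM⟩))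
          · rcases M.2.gtotal x y hxM hyM with hxy | hyx
            · exact Or.inl (Or.inl hxy)
            · exact Or.inr (Or.inl hyx)
      · intro S hS hSne
        by_cases hS' : (S \ {v}).Nonempty
        · have hS'M : ∀ x ∈ S \ {v}, (x, x) ∈ M.val := by
            intro x hx
            rcases hdiag x (hS x hx.1) with hxv | hxM
            · exact absurd hxv hx.2
            · exact hxM
          obtain ⟨m, hm, hmin⟩ := M.2.gmin (S \ {v}) hS'M hS'
          refine ⟨m, hm.1, ?_⟩
          intro x hx hxm
          rcases (memR' x m).mp hxm with hxm | ⟨hmv, _⟩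
          · have hxv : x ≠ v := by
              intro hxv
              rw [hxv] at hxm
              exact hvnd (M.2.gdom _ hxm).1
            exact hmin x ⟨hx, hxv⟩ hxm
          · exact absurd hmv hm.2
        · have hsub : ∀ x ∈ S, x = v := by
            intro x hx
            by_contra hne
            exact hS' ⟨x, hx, hne⟩
          obtain ⟨x₀, hx₀⟩ := hSne
          exact ⟨x₀, hx₀, fun x hx _ => (hsub x hx).trans (hsub x₀ hx₀).symm⟩
      · intro x u u' hux hu'x hne1 hne2 hadj1 hadj2 hne
        rcases (memR' u x).mp hux with hux | ⟨hxv, hu⟩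
        · rcases (memR' u' x).mp hu'x with hu'x | ⟨hxv, hu'⟩
          · exact M.2.gBC x u u' hux hu'x hne1 hne2 hadj1 hadj2 hne
          · exact absurd (hxv ▸ (M.2.gdom _ hux).2) hvnd
        · rcases (memR' u' x).mp hu'x with hu'x | ⟨_, hu'⟩
          · exact absurd (hxv ▸ (M.2.gdom _ hu'x).2) hvnd
          · have huM : (u, u) ∈ M.val := by
              rcases hu with huv | hu
              · exact absurd (huv.trans hxv.symm) hne1
              · exact hu
            have hu'M : (u', u') ∈ M.val := by
              rcases hu' with hu'v | hu'
              · exact absurd (hu'v.trans hxv.symm) hne2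
              · exact hu'
            have huK : u ∈ K := ⟨huM, v, hvC, (hxv ▸ hadj1).symm⟩
            have hu'K : u' ∈ K := ⟨hu'M, v, hvC, (hxv ▸ hadj2).symm⟩
            exact hKcl u huK u' hu'K hne
      · intro a a' cx cy ha ha' hcx hcy hchain hadj1 hadj2 hne
        have hcxc : cx ∈ comp := fun hmem => hcx (Or.inl hmem)
        have hcyc : cy ∈ comp := fun hmem => hcy (Or.inl hmem)
        have hchain' : ChainIn G comp cx cy :=
          hchain.mono (by intro w hw hmem; exact hw (Or.inl hmem))
        rcases hdiag a ha with hav | haM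
        · have hcxC : cx ∈ C := hCcl v hvC cx (hav ▸ hadj1) hcxc
          have hcyC : cy ∈ C := hchain'.mem_of_closed hCcl hcxC
          rcases hdiag a' ha' with ha'v | ha'M
          · exact absurd (hav.trans ha'v.symm) hne
          · rw [hav]
            exact (hvdom a' ⟨ha'M, cy, hcyC, hadj2⟩)
        · rcases hdiag a' ha' with ha'v | ha'M
          · have hcyC : cy ∈ C := hCcl v hvC cy (ha'v ▸ hadj2) hcyc
            have hcxC : cx ∈ C := hchain'.symm.mem_of_closed hCcl hcyC
            rw [ha'v]
            exact (hvdom a ⟨haM, cx, hcxC, hadj1⟩).symm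
          · exact M.2.gcomp a a' cx cy haM ha'M hcxc hcyc hchain' hadj1 hadj2 hne
    have hle : ExtR M ⟨R', goodR'⟩ := by
      refine ⟨fun p hp => Or.inl hp, ?_⟩
      rintro x y (hxy | ⟨rfl, _⟩) hy
      · exact hxy
      · exact absurd hy hvnd
    have := (hMmax _ hle).1 hvvR'
    exact hvnd this
  -- extract the order
  refine ⟨fun x y => (x, y) ∈ M.val ∧ x ≠ y, ?_, ?_, ?_, ?_, ?_⟩
  · intro x hx; exact hx.2 rfl
  · rintro x y zz ⟨hxy, hnexy⟩ ⟨hyz, hneyz⟩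
    refine ⟨M.2.gtrans _ _ _ hxy hyz, ?_⟩
    rintro rfl
    exact hnexy (M.2.gantisym _ _ hxy hyz)
  · intro x y
    rcases eq_or_ne x y with rfl | hne
    · exact Or.inr (Or.inl rfl)
    rcases M.2.gtotal x y (hdom x) (hdom y) with hxy | hyx
    · exact Or.inl ⟨hxy, hne⟩
    · exact Or.inr (Or.inr ⟨hyx, hne.symm⟩)
  · rw [WellFounded.wellFounded_iff_has_min]
    intro S hSne
    obtain ⟨m, hmS, hmin⟩ := M.2.gmin S (fun x _ => hdom x) hSne
    exact ⟨m, hmS, fun x hx hlt => hlt.2 (hmin x hx hlt.1)⟩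
  · intro x u u' hu hu' hadj1 hadj2 hne
    exact M.2.gBC x u u' hu.1 hu'.1 hu.2 hu'.2 hadj1 hadj2 hne
section Phase2

variable (G : SimpleGraph V) (lt : V → V → Prop)

/-- earlier neighbours of `x` -/
def Dset (x : V) : Set V := {y | lt y x ∧ G.Adj x y}

variable (wf : WellFounded lt)

open Classical in
/-- the recursion assigning to each vertex its node -/
noncomputable def nu : V → V :=
  wf.fix (fun x ih =>
    if h : ∃ b, ∃ _hb : lt b x, (∀ hb' : lt b x, ih b hb' = b) ∧
        ∀ w, ∀ hw : lt w x, ((w = b ∨ w ∈ Dset G lt b ∨ ih w hw = b) ↔ w ∈ Dset G lt x)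
    then h.choose else x)

/-- the final bag of the node `b` -/
def BagF (b : V) : Set V := {w | w = b ∨ w ∈ Dset G lt b ∨ nu G lt wf w = b}

/-- the bag of node `b` at stage `x` -/
def Bag (b x : V) : Set V := {w | w ∈ BagF G lt wf b ∧ lt w x}

def Cond (x : V) : Prop :=
  ∃ b, lt b x ∧ nu G lt wf b = b ∧ Bag G lt wf b x = Dset G lt x

lemma nu_cases (x : V) :
    (¬ Cond G lt wf x ∧ nu G lt wf x = x) ∨
    (lt (nu G lt wf x) x ∧ nu G lt wf (nu G lt wf x) = nu G lt wf x ∧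
      Bag G lt wf (nu G lt wf x) x = Dset G lt x) := by
  classical
  have hfix : nu G lt wf x =
      (if h : ∃ b, ∃ _hb : lt b x, (∀ hb' : lt b x, nu G lt wf b = b) ∧
        ∀ w, ∀ _hw : lt w x, ((w = b ∨ w ∈ Dset G lt b ∨ nu G lt wf w = b) ↔ w ∈ Dset G lt x)
      then h.choose else x) := by
    conv_lhs => rw [nu, WellFounded.fix_eq]
    rfl
  have hiff : (∃ b, ∃ _hb : lt b x, (∀ _hb' : lt b x, nu G lt wf b = b) ∧
        ∀ w, ∀ _hw : lt w x, ((w = b ∨ w ∈ Dset G lt b ∨ nu G lt wf w = b) ↔ w ∈ Dset G lt x)) ↔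
      Cond G lt wf x := by
    constructor
    · rintro ⟨b, hb, hnb, hbag⟩
      refine ⟨b, hb, hnb hb, ?_⟩
      ext w
      constructor
      · rintro ⟨hmem, hlt⟩
        exact (hbag w hlt).mp hmem
      · intro hw
        exact ⟨(hbag w hw.1).mpr hw, hw.1⟩
    · rintro ⟨b, hb, hnb, hbag⟩
      refine ⟨b, hb, fun _ => hnb, fun w hw => ?_⟩
      constructor
      · intro hmem
        have : w ∈ Bag G lt wf b x := ⟨hmem, hw⟩
        rw [hbag] at this
        exact this
      · intro hmem
        have : w ∈ Bag G lt wf b x := by rw [hbag]; exact hmem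
        exact this.1
  by_cases hcond : Cond G lt wf x
  · right
    have hex := hiff.mpr hcond
    rw [hfix, dif_pos hex]
    obtain ⟨hb, hnb, hbag⟩ := hex.choose_spec
    refine ⟨hb, hnb hb, ?_⟩
    ext w
    constructor
    · rintro ⟨hmem, hlt⟩
      exact (hbag w hlt).mp hmem
    · intro hw
      exact ⟨(hbag w hw.1).mpr hw, hw.1⟩
  · left
    refine ⟨hcond, ?_⟩
    rw [hfix, dif_neg (fun hex => hcond (hiff.mp hex))]

lemma nu_node (x : V) : nu G lt wf (nu G lt wf x) = nu G lt wf x := by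
  rcases nu_cases G lt wf x with ⟨_, h⟩ | ⟨_, h, _⟩
  · rw [h, h]
  · exact h

lemma nu_le (x : V) : nu G lt wf x = x ∨ lt (nu G lt wf x) x := by
  rcases nu_cases G lt wf x with ⟨_, h⟩ | ⟨h, _, _⟩
  · exact Or.inl h
  · exact Or.inr h

lemma mem_bagF_self (x : V) : x ∈ BagF G lt wf (nu G lt wf x) := by
  rcases nu_cases G lt wf x with ⟨_, h⟩ | _
  · rw [h]; exact Or.inl rfl
  · exact Or.inr (Or.inr rfl)

lemma dset_sub_bagF (x : V) : Dset G lt x ⊆ BagF G lt wf (nu G lt wf x) := by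
  rcases nu_cases G lt wf x with ⟨_, h⟩ | ⟨_, _, h⟩
  · rw [h]
    intro w hw
    exact Or.inr (Or.inl hw)
  · intro w hw
    have : w ∈ Bag G lt wf (nu G lt wf x) x := by rw [h]; exact hw
    exact this.1

/-- if `nu w = b` and `w ≠ b` then `w` "joined" node `b` -/
lemma joiner_spec {w b : V} (hnw : nu G lt wf w = b) (hne : w ≠ b) :
    lt b w ∧ nu G lt wf b = b ∧ Bag G lt wf b w = Dset G lt w := by
  rcases nu_cases G lt wf w with ⟨_, h⟩ | ⟨h1, h2, h3⟩
  · exact absurd (hnw.symm.trans h).symm hne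
  · rw [hnw] at h1 h2 h3
    exact ⟨h1, h2, h3⟩

end Phase2

section Invariants

variable {G : SimpleGraph V} {lt : V → V → Prop} {wf : WellFounded lt}

lemma asym (irr : ∀ x, ¬ lt x x) (tr : ∀ x y z, lt x y → lt y z → lt x z)
    {a b : V} (h1 : lt a b) (h2 : lt b a) : False := irr a (tr _ _ _ h1 h2)

lemma dxclique
    (BC : ∀ x u u', lt u x → lt u' x → G.Adj x u → G.Adj x u' → u ≠ u' → G.Adj u u')
    (x : V) : ∀ u ∈ Dset G lt x, ∀ w ∈ Dset G lt x, u ≠ w → G.Adj u w := by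
  intro u hu w hw hne
  exact BC x u w hu.1 hw.1 hu.2 hw.2 hne

lemma bag_clique (irr : ∀ x, ¬ lt x x) (tr : ∀ x y z, lt x y → lt y z → lt x z)
    (tot : ∀ x y, lt x y ∨ x = y ∨ lt y x)
    (BC : ∀ x u u', lt u x → lt u' x → G.Adj x u → G.Adj x u' → u ≠ u' → G.Adj u u')
    {b : V} (hnb : nu G lt wf b = b) :
    ∀ w ∈ BagF G lt wf b, ∀ w' ∈ BagF G lt wf b, w ≠ w' → G.Adj w w' := by
  have key : ∀ w w', lt w w' → w ∈ BagF G lt wf b → w' ∈ BagF G lt wf b → G.Adj w' w := by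
    intro w w' hlt hw hw'
    by_cases hwb : w = b
    · subst hwb
      rcases hw' with rfl | hD | hnu
      · exact absurd hlt (irr _)
      · exact absurd hlt (fun h => asym irr tr h hD.1)
      · obtain ⟨hbw', _, hbag⟩ := joiner_spec G lt wf hnu (fun he => irr _ (he ▸ hlt))
        have hmem : w ∈ Bag G lt wf w w' := ⟨Or.inl rfl, hlt⟩
        rw [hbag] at hmem
        exact hmem.2
    by_cases hw'b : w' = b
    · subst hw'b
      rcases hw with rfl | hD | hnu
      · exact absurd rfl hwb
      · exact hD.2
      · have := (joiner_spec G lt wf hnu hwb).1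
        exact absurd hlt (fun h => asym irr tr h this)
    · rcases hw' with rfl | hD' | hnu'
      · exact absurd rfl hw'b
      · rcases hw with rfl | hD | hnu
        · exact absurd rfl hwb
        · exact BC b w' w hD'.1 hD.1 hD'.2 hD.2 (fun he => irr _ (he ▸ hlt))
        · have hbw := (joiner_spec G lt wf hnu hwb).1
          exact absurd (tr _ _ _ (tr _ _ _ hbw hlt) hD'.1) (irr b)
      · obtain ⟨hbw', _, hbag⟩ := joiner_spec G lt wf hnu' hw'b
        have : w ∈ Bag G lt wf b w' := ⟨hw, hlt⟩
        rw [hbag] at this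
        exact this.2
  intro w hw w' hw' hne
  rcases tot w w' with hlt | heq | hlt
  · exact (key w w' hlt hw hw').symm
  · exact absurd heq hne
  · exact key w' w hlt hw' hw

def CNp (G : SimpleGraph V) (lt : V → V → Prop) (wf : WellFounded lt) (x : V) : Prop :=
  (Dset G lt x).Nonempty → ∃ b, lt b x ∧ nu G lt wf b = b ∧ Dset G lt x ⊆ Bag G lt wf b x

def NSp (G : SimpleGraph V) (lt : V → V → Prop) (wf : WellFounded lt) (x : V) : Prop :=
  ∀ b b', nu G lt wf b = b → nu G lt wf b' = b' → lt b x → lt b' x → b ≠ b' →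
    ¬ (Bag G lt wf b x ⊆ Bag G lt wf b' x)

theorem cn_nosub (irr : ∀ x, ¬ lt x x) (tr : ∀ x y z, lt x y → lt y z → lt x z)
    (tot : ∀ x y, lt x y ∨ x = y ∨ lt y x)
    (BC : ∀ x u u', lt u x → lt u' x → G.Adj x u → G.Adj x u' → u ≠ u' → G.Adj u u')
    (hH : ¬ ∃ v : ℕ → V, Function.Injective v ∧
        (∀ i j : ℕ, i ≠ j → G.Adj (v i) (v j)) ∧
        ∀ i : ℕ, ∃ w : V, w ≠ v i ∧ (∀ j : ℕ, j < i → G.Adj w (v j)) ∧ ¬ G.Adj w (v i)) :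
    ∀ x : V, CNp G lt wf x ∧ NSp G lt wf x := by
  classical
  intro x
  induction x using WellFounded.induction wf with
  | _ x ih =>
  -- the domination-implies-membership instance
  have Mlem : ∀ z b, lt z x → nu G lt wf b = b → lt b z →
      (∀ w ∈ Bag G lt wf b z, G.Adj z w) → nu G lt wf z = b := by
    intro z b hzx hnb hbz hdom
    have hsub1 : Bag G lt wf b z ⊆ Dset G lt z := fun w hw => ⟨hw.2, hdom w hw⟩
    have hbmem : b ∈ Bag G lt wf b z := ⟨Or.inl rfl, hbz⟩
    obtain ⟨bs, hbsz, hnbs, hsub2⟩ := (ih z hzx).1 ⟨b, hsub1 hbmem⟩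
    have hbbs : b = bs := by
      by_contra hne
      exact (ih z hzx).2 b bs hnb hnbs hbz hbsz hne (hsub1.trans hsub2)
    rw [← hbbs] at hsub2
    have heq : Bag G lt wf b z = Dset G lt z := Set.Subset.antisymm hsub1 hsub2
    have hcond : Cond G lt wf z := ⟨b, hbz, hnb, heq⟩
    rcases nu_cases G lt wf z with ⟨hnc, _⟩ | ⟨h1, h2, h3⟩
    · exact absurd hcond hnc
    · by_contra hne
      refine (ih z hzx).2 (nu G lt wf z) b h2 hnb h1 hbz hne ?_
      rw [h3, ← heq]
  constructor
  · -- CN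
    by_cases hmax : ∃ m ∈ Dset G lt x, ∀ w ∈ Dset G lt x, w = m ∨ lt w m
    · intro _
      obtain ⟨m, hm, hmall⟩ := hmax
      refine ⟨nu G lt wf m, ?_, nu_node G lt wf m, ?_⟩
      · rcases nu_le G lt wf m with hh | hh
        · rw [hh]; exact hm.1
        · exact tr _ _ _ hh hm.1
      · intro w hw
        refine ⟨?_, hw.1⟩
        rcases hmall w hw with rfl | hlt
        · exact mem_bagF_self G lt wf w
        · refine dset_sub_bagF G lt wf m ⟨hlt, ?_⟩
          exact BC x m w hm.1 hw.1 hm.2 hw.2 (fun he => irr _ (he ▸ hlt))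
    · intro hDne
      by_contra hCN
      have below_mem_bag : ∀ u ∈ Dset G lt x, ∀ w ∈ Dset G lt x, (w = u ∨ lt w u) →
          w ∈ Bag G lt wf (nu G lt wf u) x := by
        intro u hu w hw hcase
        refine ⟨?_, hw.1⟩
        rcases hcase with rfl | hlt
        · exact mem_bagF_self G lt wf w
        · refine dset_sub_bagF G lt wf u ⟨hlt, ?_⟩
          exact BC x u w hu.1 hw.1 hu.2 hw.2 (fun he => irr _ (he ▸ hlt))
      have step : ∀ u : {v // v ∈ Dset G lt x}, ∃ w : {v // v ∈ Dset G lt x},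
          w.1 ∉ Bag G lt wf (nu G lt wf u.1) x := by
        intro u
        have hnusmall : lt (nu G lt wf u.1) x := by
          rcases nu_le G lt wf u.1 with hh | hh
          · rw [hh]; exact u.2.1
          · exact tr _ _ _ hh u.2.1
        have : ¬ (Dset G lt x ⊆ Bag G lt wf (nu G lt wf u.1) x) := by
          intro hsub
          exact hCN ⟨nu G lt wf u.1, hnusmall, nu_node G lt wf u.1, hsub⟩
        obtain ⟨w, hwD, hwB⟩ := Set.not_subset.mp this
        exact ⟨⟨w, hwD⟩, hwB⟩
      choose stepf hstepf using step
      set uu : ℕ → {v // v ∈ Dset G lt x} :=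
        fun i => Nat.rec ⟨hDne.choose, hDne.choose_spec⟩ (fun _ prev => stepf prev) i with huu
      have huusucc : ∀ i, uu (i + 1) = stepf (uu i) := fun i => rfl
      have hmono : ∀ i, lt (uu i).1 (uu (i + 1)).1 := by
        intro i
        have hnot := huusucc i ▸ hstepf (uu i)
        rcases tot (uu (i+1)).1 (uu i).1 with hlt | heq | hlt
        · exact absurd (below_mem_bag _ (uu i).2 _ (uu (i+1)).2 (Or.inr hlt)) hnot
        · exact absurd (below_mem_bag _ (uu i).2 _ (uu (i+1)).2 (Or.inl heq)) hnot
        · exact hlt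
      have hchain : ∀ j i, j < i → lt (uu j).1 (uu i).1 := by
        intro j i
        induction i with
        | zero => omega
        | succ i ihc =>
          intro hj
          rcases Nat.lt_or_ge j i with hji | hji
          · exact tr _ _ _ (ihc hji) (hmono i)
          · have : j = i := by omega
            rw [this]
            exact hmono i
      have hne_chain : ∀ j i, j < i → (uu j).1 ≠ (uu i).1 := by
        intro j i hj he
        exact irr _ (he ▸ hchain j i hj)
      have wit : ∀ i, ∃ w, w ∈ Bag G lt wf (nu G lt wf (uu i).1) x ∧
          ¬ G.Adj (uu (i+1)).1 w := by
        intro i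
        by_contra hcon
        push_neg at hcon
        have hdom : ∀ w ∈ Bag G lt wf (nu G lt wf (uu i).1) (uu (i+1)).1,
            G.Adj (uu (i+1)).1 w := by
          intro w hw
          exact hcon w ⟨hw.1, tr _ _ _ hw.2 (uu (i+1)).2.1⟩
        have hnusmall : lt (nu G lt wf (uu i).1) (uu (i+1)).1 := by
          rcases nu_le G lt wf (uu i).1 with hh | hh
          · rw [hh]; exact hmono i
          · exact tr _ _ _ hh (hmono i)
        have := Mlem (uu (i+1)).1 (nu G lt wf (uu i).1) (uu (i+1)).2.1
          (nu_node G lt wf (uu i).1) hnusmall hdom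
        have hmem : (uu (i+1)).1 ∈ Bag G lt wf (nu G lt wf (uu i).1) x := by
          refine ⟨Or.inr (Or.inr this), (uu (i+1)).2.1⟩
        exact (huusucc i ▸ hstepf (uu i)) hmem
      choose witf hwitf using wit
      apply hH
      refine ⟨fun i => (uu (i+1)).1, ?_, ?_, ?_⟩
      · intro i j hij
        by_contra hne
        rcases Nat.lt_or_ge i j with hlt | hge
        · exact hne_chain (i+1) (j+1) (by omega) hij
        · exact hne_chain (j+1) (i+1) (by omega) hij.symm
      · intro i j hij
        have hne : (uu (i+1)).1 ≠ (uu (j+1)).1 := by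
          rcases Nat.lt_or_ge i j with hlt | hge
          · exact hne_chain (i+1) (j+1) (by omega)
          · exact fun he => hne_chain (j+1) (i+1) (by omega) he.symm
        exact dxclique BC x _ (uu (i+1)).2 _ (uu (j+1)).2 hne
      · intro i
        refine ⟨witf i, ?_, ?_, fun hadj => (hwitf i).2 hadj.symm⟩
        · intro he
          have hmem := (hwitf i).1
          rw [he] at hmem
          exact (huusucc i ▸ hstepf (uu i)) hmem
        · intro j hj
          -- witf i is adjacent to uu (j+1) for j < i since both in the bag of nu (uu i)
          have h1 : (uu (j+1)).1 ∈ BagF G lt wf (nu G lt wf (uu i).1) := by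
            have := below_mem_bag _ (uu i).2 _ (uu (j+1)).2
              (by
                rcases Nat.lt_or_ge (j+1) i with hlt | hge
                · exact Or.inr (hchain (j+1) i hlt)
                · have : j + 1 = i := by omega
                  exact Or.inl (by rw [this]))
            exact this.1
          have h2 : witf i ∈ BagF G lt wf (nu G lt wf (uu i).1) := (hwitf i).1.1
          have hne : witf i ≠ (uu (j+1)).1 := by
            intro he
            have hadj : G.Adj (uu (i+1)).1 (uu (j+1)).1 :=
              dxclique BC x _ (uu (i+1)).2 _ (uu (j+1)).2
                (fun hee => hne_chain (j+1) (i+1) (by omega) hee.symm)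
            rw [← he] at hadj
            exact (hwitf i).2 hadj
          exact bag_clique irr tr tot BC (nu_node G lt wf (uu i).1) _ h2 _ h1 hne
  · -- NOSUB
    intro b b' hnb hnb' hbx hb'x hne hsub
    have hbmem : b ∈ Bag G lt wf b x := ⟨Or.inl rfl, hbx⟩
    have hbB' : b ∈ BagF G lt wf b' := (hsub hbmem).1
    have hbb' : b ∈ Dset G lt b' := by
      rcases hbB' with rfl | hD | hnu
      · exact absurd rfl hne
      · exact hD
      · exact absurd (hnb ▸ hnu) hne
    have claim : ∀ w ∈ Bag G lt wf b x, w ∈ Dset G lt b' := by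
      intro w hw
      have hwB' : w ∈ BagF G lt wf b' := (hsub hw).1
      have hwne : w ≠ b' := by
        rintro rfl
        rcases hw.1 with rfl | hD | hnu
        · exact hne rfl
        · exact asym irr tr hD.1 hbb'.1
        · exact hne ((hnb'.symm.trans hnu).symm)
      rcases hwB' with rfl | hD | hnu
      · exact absurd rfl hwne
      · exact hD
      · exfalso
        have hb'w := (joiner_spec G lt wf hnu hwne).1
        rcases hw.1 with rfl | hD | hnu2
        · exact hne (hnb.symm.trans hnu)
        · exact asym irr tr hbb'.1 (tr _ _ _ hb'w hD.1)
        · exact hne ((hnu2.symm.trans hnu))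
    obtain ⟨bs, hbsb', hnbs, hsubD⟩ := (ih b' hb'x).1 ⟨b, hbb'⟩
    have hsubsmall : Bag G lt wf b b' ⊆ Bag G lt wf bs b' := by
      intro w hw
      have hwx : w ∈ Bag G lt wf b x := ⟨hw.1, tr _ _ _ hw.2 hb'x⟩
      exact hsubD (claim w hwx)
    have hbbs : b = bs := by
      by_contra hnebs
      exact (ih b' hb'x).2 b bs hnb hnbs hbb'.1 hbsb' hnebs hsubsmall
    rw [← hbbs] at hsubD
    have heq : Bag G lt wf b b' = Dset G lt b' := by
      apply Set.Subset.antisymm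
      · intro w hw
        exact claim w ⟨hw.1, tr _ _ _ hw.2 hb'x⟩
      · exact hsubD
    have hcond : Cond G lt wf b' := ⟨b, hbb'.1, hnb, heq⟩
    rcases nu_cases G lt wf b' with ⟨hnc, _⟩ | ⟨h1, _, _⟩
    · exact absurd hcond hnc
    · rw [hnb'] at h1
      exact irr _ h1

end Invariants


/- generic walk helper lemmas -/
lemma getVert_mem_support {W : Type u} {T : SimpleGraph W} :
    ∀ {a b : W} (p : T.Walk a b) (i : ℕ), p.getVert i ∈ p.support := by
  intro a b p
  induction p with
  | nil =>
    intro i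
    rcases i with _ | i
    · simp [SimpleGraph.Walk.getVert]
    · simp [SimpleGraph.Walk.getVert]
  | cons h q ih =>
    intro i
    rcases i with _ | i
    · simp [SimpleGraph.Walk.getVert]
    · rw [SimpleGraph.Walk.getVert_cons_succ, SimpleGraph.Walk.support_cons]
      exact List.mem_cons_of_mem _ (ih i)

lemma path_getVert_ne_start {W : Type u} {T : SimpleGraph W} :
    ∀ {a b : W} (p : T.Walk a b), p.IsPath → ∀ i, 0 < i → i ≤ p.length →
      p.getVert i ≠ a := by
  intro a b p
  induction p with
  | nil =>
    intro _ i hi hil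
    simp at hil
    omega
  | cons h q ih =>
    intro hp i hi hil
    rcases i with _ | i
    · omega
    rw [SimpleGraph.Walk.getVert_cons_succ]
    rw [SimpleGraph.Walk.cons_isPath_iff] at hp
    intro heq
    exact hp.2 (heq ▸ getVert_mem_support q i)

lemma list_max {W : Type u} (lt : W → W → Prop)
    (tot : ∀ x y : W, lt x y ∨ x = y ∨ lt y x)
    (tr : ∀ x y z : W, lt x y → lt y z → lt x z) :
    ∀ (l : List W), l ≠ [] → ∃ m ∈ l, ∀ w ∈ l, w = m ∨ lt w m := by
  intro l
  induction l with
  | nil => intro h; exact absurd rfl h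
  | cons a l ih =>
    intro _
    rcases eq_or_ne l [] with rfl | hlne
    · refine ⟨a, by simp, ?_⟩
      intro w hw
      simp at hw
      exact Or.inl hw
    obtain ⟨m, hm, hmax⟩ := ih hlne
    rcases tot a m with hlt | heq | hlt
    · refine ⟨m, List.mem_cons_of_mem _ hm, ?_⟩
      intro w hw
      rcases List.mem_cons.mp hw with rfl | hw
      · exact Or.inr hlt
      · exact hmax w hw
    · refine ⟨m, List.mem_cons_of_mem _ hm, ?_⟩
      intro w hw
      rcases List.mem_cons.mp hw with rfl | hw
      · exact Or.inl heq
      · exact hmax w hw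
    · refine ⟨a, List.mem_cons_self, ?_⟩
      intro w hw
      rcases List.mem_cons.mp hw with rfl | hw
      · exact Or.inl rfl
      · rcases hmax w hw with rfl | hlt'
        · exact Or.inr hlt
        · exact Or.inr (tr _ _ _ hlt' hlt)



end Halin

/-- Strengthened Halin theorem: a chordal graph, none of whose countable cliques can be
enumerated as `v₀, v₁, …` so that for each `i` some vertex (other than `vᵢ`) is adjacent
to all of `v₀, …, v_{i-1}` but not to `vᵢ`, is the intersection graph of a family of
subtrees of a tree. -/
theorem stmt10 {V : Type u} (G : SimpleGraph V) (hchordal : Chordal G)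
    (h : ¬ ∃ v : ℕ → V, Function.Injective v ∧
        (∀ i j : ℕ, i ≠ j → G.Adj (v i) (v j)) ∧
        ∀ i : ℕ, ∃ w : V, w ≠ v i ∧ (∀ j : ℕ, j < i → G.Adj w (v j)) ∧ ¬ G.Adj w (v i)) :
    ∃ (W : Type u) (T : SimpleGraph W) (t : V → Set W), T.IsTree ∧
      (∀ x : V, (T.induce (t x)).Connected) ∧
      ∀ x y : V, G.Adj x y ↔ x ≠ y ∧ (t x ∩ t y).Nonempty := by
  classical
  by_cases hVempty : IsEmpty V
  · refine ⟨PUnit, ⊥, fun x => (hVempty.elim x), ⟨?_, ?_⟩, ?_, ?_⟩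
    · haveI : Nonempty PUnit := ⟨PUnit.unit⟩
      refine SimpleGraph.Connected.mk ?_
      intro a b
      rw [Subsingleton.elim a b]
    · intro v c hc
      exact hc.ne_bot rfl
    · intro x; exact (hVempty.elim x)
    · intro x; exact (hVempty.elim x)
  rw [not_isEmpty_iff] at hVempty
  obtain ⟨lt, irr, tr, tot, wf, BC⟩ := Halin.phase1 hchordal h
  have hCN : ∀ x, Halin.CNp G lt wf x := fun x => (Halin.cn_nosub irr tr tot BC h x).1
  obtain ⟨v₀⟩ := hVempty
  set r₀ := wf.min Set.univ ⟨v₀, trivial⟩ with hr₀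
  have hr₀min : ∀ z, ¬ lt z r₀ := fun z hz =>
    wf.not_lt_min Set.univ trivial hz
  have hnode_r₀ : Halin.nu G lt wf r₀ = r₀ := by
    rcases Halin.nu_cases G lt wf r₀ with ⟨_, h1⟩ | ⟨h1, _, _⟩
    · exact h1
    · exact absurd h1 (hr₀min _)
  set Wt := {b : V // Halin.nu G lt wf b = b} with hWt
  have hattex : ∀ b : Wt, ∃ a : Wt, (b.1 = r₀ → a = b) ∧
      (b.1 ≠ r₀ → lt a.1 b.1 ∧ ∀ w ∈ Halin.Dset G lt b.1, w ∈ Halin.BagF G lt wf a.1) := by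
    intro b
    by_cases hb : b.1 = r₀
    · exact ⟨b, fun _ => rfl, fun hne => absurd hb hne⟩
    · by_cases hD : (Halin.Dset G lt b.1).Nonempty
      · obtain ⟨bs, hlt, hnode, hsub⟩ := hCN b.1 hD
        exact ⟨⟨bs, hnode⟩, fun he => absurd he hb, fun _ => ⟨hlt, fun w hw => (hsub hw).1⟩⟩
      · refine ⟨⟨r₀, hnode_r₀⟩, fun he => absurd he hb, fun _ => ⟨?_, ?_⟩⟩
        · rcases tot r₀ b.1 with h1 | h1 | h1
          · exact h1
          · exact absurd h1.symm hb
          · exact absurd h1 (hr₀min _)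
        · intro w hw
          exact absurd ⟨w, hw⟩ hD
  choose att hatt using hattex
  have attlt : ∀ b : Wt, b.1 ≠ r₀ → lt (att b).1 b.1 := fun b hb => ((hatt b).2 hb).1
  have attne : ∀ b : Wt, b.1 ≠ r₀ → att b ≠ b := by
    intro b hb he
    have := attlt b hb
    rw [he] at this
    exact irr _ this
  set T : SimpleGraph Wt := {
    Adj := fun a b => a ≠ b ∧ (att a = b ∨ att b = a)
    symm := by
      constructor
      rintro a b ⟨hne, hab⟩
      exact ⟨hne.symm, hab.symm⟩
    loopless := ⟨fun a ha => ha.1 rfl⟩ } with hT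
  have Tadj_iff : ∀ a b : Wt, T.Adj a b ↔ (a ≠ b ∧ (att a = b ∨ att b = a)) :=
    fun a b => Iff.rfl
  set t : V → Set Wt := fun x => {b : Wt | x ∈ Halin.BagF G lt wf b.1} with ht
  set hub : V → Wt := fun x => ⟨Halin.nu G lt wf x, Halin.nu_node G lt wf x⟩ with hhub
  have hub_mem : ∀ x, hub x ∈ t x := fun x => Halin.mem_bagF_self G lt wf x
  haveI : Nonempty Wt := ⟨⟨r₀, hnode_r₀⟩⟩
  have hreach : ∀ bv : V, ∀ hbv : Halin.nu G lt wf bv = bv,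
      T.Reachable ⟨bv, hbv⟩ ⟨r₀, hnode_r₀⟩ := by
    intro bv
    induction bv using WellFounded.induction wf with
    | _ bv ih =>
      intro hbv
      by_cases hb : bv = r₀
      · subst hb
        exact SimpleGraph.Reachable.refl _
      · have hadj : T.Adj ⟨bv, hbv⟩ (att ⟨bv, hbv⟩) :=
          (Tadj_iff _ _).mpr ⟨fun he => attne ⟨bv, hbv⟩ hb he.symm, Or.inl rfl⟩
        exact (hadj.reachable).trans (ih (att ⟨bv, hbv⟩).1 (attlt ⟨bv, hbv⟩ hb) (att ⟨bv, hbv⟩).2)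
  have hconn : T.Connected := by
    refine SimpleGraph.Connected.mk ?_
    intro a b
    exact (hreach a.1 a.2).trans (hreach b.1 b.2).symm
  have hacyc : T.IsAcyclic := by
    intro v c hc
    have hsupne : c.support ≠ [] := by
      rw [SimpleGraph.Walk.support_eq_cons]
      simp
    obtain ⟨m, hmmem, hmmax⟩ := Halin.list_max (fun a b : Wt => lt a.1 b.1)
      (fun a b => by
        rcases tot a.1 b.1 with h1 | h1 | h1
        · exact Or.inl h1
        · exact Or.inr (Or.inl (Subtype.ext h1))
        · exact Or.inr (Or.inr h1))
      (fun a b c h1 h2 => tr _ _ _ h1 h2) c.support hsupne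
    have key : ∃ c' : T.Walk m m, c'.IsCycle ∧ ∀ w ∈ c'.support, w = m ∨ lt w.1 m.1 := by
      refine ⟨c.rotate m hmmem, hc.rotate hmmem, ?_⟩
      intro w hw
      rw [SimpleGraph.Walk.support_eq_cons] at hw
      rcases List.mem_cons.mp hw with rfl | hw
      · exact Or.inl rfl
      · apply hmmax
        rw [SimpleGraph.Walk.support_eq_cons]
        exact List.mem_cons_of_mem _
          (((SimpleGraph.Walk.support_rotate c m hmmem).mem_iff).mp hw)
    obtain ⟨c', hc', hsupp⟩ := key
    cases c' with
    | nil => exact hc'.ne_nil rfl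
    | @cons _ s' _ hadj p =>
      have hlen : 2 ≤ p.length := by
        have h3 := hc'.three_le_length
        simp only [SimpleGraph.Walk.length_cons] at h3
        omega
      obtain ⟨hpath, hedge⟩ := (SimpleGraph.Walk.cons_isCycle_iff p hadj).mp hc'
      set n := p.length with hn
      set tv := p.getVert (n - 1) with htv
      have hadjt : T.Adj tv m := by
        have := p.adj_getVert_succ (show n - 1 < p.length by omega)
        rwa [show n - 1 + 1 = n from by omega, hn, SimpleGraph.Walk.getVert_length] at this
      have hs'mem : s' ∈ (SimpleGraph.Walk.cons hadj p).support := by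
        rw [SimpleGraph.Walk.support_cons]
        exact List.mem_cons_of_mem _ p.start_mem_support
      have htmem : tv ∈ (SimpleGraph.Walk.cons hadj p).support := by
        rw [SimpleGraph.Walk.support_cons]
        exact List.mem_cons_of_mem _ (Halin.getVert_mem_support p _)
      have hs'lt : lt s'.1 m.1 := by
        rcases hsupp s' hs'mem with he | hlt
        · exact absurd he.symm ((Tadj_iff _ _).mp hadj).1
        · exact hlt
      have htlt : lt tv.1 m.1 := by
        rcases hsupp tv htmem with he | hlt
        · exact absurd he ((Tadj_iff _ _).mp hadjt).1
        · exact hlt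
      have h1 : att m = s' := by
        rcases ((Tadj_iff _ _).mp hadj).2 with h1 | h1
        · exact h1
        · exfalso
          by_cases hs'r : s'.1 = r₀
          · rw [(hatt s').1 hs'r] at h1
            exact ((Tadj_iff _ _).mp hadj).1 h1.symm
          · have := attlt s' hs'r
            rw [h1] at this
            exact Halin.asym irr tr this hs'lt
      have h2 : att m = tv := by
        rcases ((Tadj_iff _ _).mp hadjt).2 with h2 | h2
        · exfalso
          by_cases htr : tv.1 = r₀
          · rw [(hatt tv).1 htr] at h2
            exact ((Tadj_iff _ _).mp hadjt).1 h2
          · have := attlt tv htr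
            rw [h2] at this
            exact Halin.asym irr tr this htlt
        · exact h2
      have heq : tv = s' := by rw [← h1, ← h2]
      exact Halin.path_getVert_ne_start p hpath (n - 1) (by omega) (by omega) heq
  have hindconn : ∀ x : V, ∀ bv : V, ∀ (hb : Halin.nu G lt wf bv = bv)
      (hmem : (⟨bv, hb⟩ : Wt) ∈ t x),
      (T.induce (t x)).Reachable ⟨⟨bv, hb⟩, hmem⟩ ⟨hub x, hub_mem x⟩ := by
    intro x bv
    induction bv using WellFounded.induction wf with
    | _ bv ih =>
      intro hb hmem
      have hmem' : x = bv ∨ x ∈ Halin.Dset G lt bv ∨ Halin.nu G lt wf x = bv := hmem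
      by_cases hhx : Halin.nu G lt wf x = bv
      · have heq : (⟨⟨bv, hb⟩, hmem⟩ : ↥(t x)) = ⟨hub x, hub_mem x⟩ := by
          apply Subtype.ext
          apply Subtype.ext
          exact hhx.symm
        rw [heq]
      · have hD : x ∈ Halin.Dset G lt bv := by
          rcases hmem' with heq | hD | hnu
          · exfalso
            apply hhx
            rw [← heq] at hb ⊢
            exact hb
          · exact hD
          · exact absurd hnu hhx
        have hbne : bv ≠ r₀ := by
          intro he
          rw [he] at hD
          exact hr₀min x hD.1
        have hx' : x ∈ Halin.BagF G lt wf (att ⟨bv, hb⟩).1 :=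
          ((hatt ⟨bv, hb⟩).2 hbne).2 x hD
        have hadj : (T.induce (t x)).Adj ⟨⟨bv, hb⟩, hmem⟩ ⟨att ⟨bv, hb⟩, hx'⟩ := by
          show T.Adj (⟨bv, hb⟩ : Wt) (att ⟨bv, hb⟩)
          exact (Tadj_iff _ _).mpr ⟨fun he => attne ⟨bv, hb⟩ hbne he.symm, Or.inl rfl⟩
        have hrec := ih (att ⟨bv, hb⟩).1 (attlt ⟨bv, hb⟩ hbne) (att ⟨bv, hb⟩).2 hx'
        exact hadj.reachable.trans hrec
  refine ⟨Wt, T, t, ⟨hconn, hacyc⟩, ?_, ?_⟩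
  · intro x
    haveI : Nonempty ↥(t x) := ⟨⟨hub x, hub_mem x⟩⟩
    refine SimpleGraph.Connected.mk ?_
    intro a b
    exact (hindconn x a.1.1 a.1.2 a.2).trans (hindconn x b.1.1 b.1.2 b.2).symm
  · intro x y
    constructor
    · intro hadj
      refine ⟨hadj.ne, ?_⟩
      rcases tot x y with hlt | heq | hlt
      · exact ⟨hub y, Halin.dset_sub_bagF G lt wf y ⟨hlt, hadj.symm⟩,
          Halin.mem_bagF_self G lt wf y⟩
      · exact absurd heq hadj.ne
      · exact ⟨hub x, Halin.mem_bagF_self G lt wf x,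
          Halin.dset_sub_bagF G lt wf x ⟨hlt, hadj⟩⟩
    · rintro ⟨hne, b, hbx, hby⟩
      exact Halin.bag_clique irr tr tot BC b.2 x hbx y hby hne
end
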